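/- arXiv:2310.14337 — 8 statements merged into one kernel-verified Lean document; each statement's English description precedes it below -/
import Mathlib

section
/- Let θ be a real d×K matrix such that θᵀθ is invertible, and let θ⁺ = (θᵀθ)⁻¹θᵀ denote its pseudo-inverse. Let c₁,…,c_M ∈ ℝ^K, let p₁,…,p_M be nonnegative real weights, and let ℓ₁,…,ℓ_M : ℝ^d → ℝ be arbitrary functions. Define b_i = θ c_i for each i and b̄ = (1/M) Σ_{i=1}^M b_i. Then the PPFL objective with all-ones affinity matrix and λ = 1/M equals the GLMM-type objective; that is, Σ_{i=1}^M p_i ℓ_i(θ c_i) + (1/(2M)) Σ_{i=1}^M Σ_{j=1}^M ‖c_i − c_j‖² = Σ_{i=1}^M p_i ℓ_i(b_i) + Σ_{i=1}^M (b_i − b̄)ᵀ (θ⁺)ᵀ θ⁺ (b_i − b̄), where ‖·‖ denotes the Euclidean norm. -/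
open Matrix Finset

lemma scal (M : ℕ) (hM : 0 < M) (x : Fin M → ℝ) :
    (1 / (2 * M)) * ∑ i, ∑ j, (x i - x j)^2 = ∑ i, (x i - (M:ℝ)⁻¹ * ∑ j, x j)^2 := by
  have hM' : (M:ℝ) ≠ 0 := Nat.cast_ne_zero.mpr hM.ne'
  have cross : ∑ i : Fin M, ∑ j : Fin M, x i * x j = (∑ i, x i)^2 := by
    rw [sq, Finset.sum_mul_sum]
  have h1 : ∑ i : Fin M, ∑ j : Fin M, (x i - x j)^2
      = 2*M*∑ i, (x i)^2 - 2*(∑ i, x i)^2 := by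
    have : ∀ i j : Fin M, (x i - x j)^2 = (x i)^2 + (x j)^2 - 2*(x i * x j) := by
      intros; ring
    simp only [this, Finset.sum_sub_distrib, Finset.sum_add_distrib, ← Finset.mul_sum,
      Finset.sum_const, Finset.card_fin, nsmul_eq_mul, cross]
    rw [← Finset.sum_mul, ← sq]
    ring
  have h2 : ∑ i : Fin M, (x i - (M:ℝ)⁻¹ * ∑ j, x j)^2
      = ∑ i, (x i)^2 - (M:ℝ)⁻¹*(∑ i, x i)^2 := by
    have : ∀ i : Fin M, (x i - (M:ℝ)⁻¹ * ∑ j, x j)^2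
        = (x i)^2 - 2*(M:ℝ)⁻¹*(∑ j, x j)*x i + (M:ℝ)⁻¹^2*(∑ j, x j)^2 := by
      intros; ring
    simp only [this, Finset.sum_sub_distrib, Finset.sum_add_distrib, ← Finset.sum_mul,
      ← Finset.mul_sum, Finset.sum_const, Finset.card_fin, nsmul_eq_mul]
    field_simp
    ring
  rw [h1, h2]
  field_simp

/-- Theorem 1 (PPFL ↔ GLMM objective equivalence): with all-ones affinity matrix
and λ = 1/M, the PPFL objective equals the GLMM-type objective. -/
theorem stmt_0 (d K M : ℕ) (hM : 0 < M)
    (θ : Matrix (Fin d) (Fin K) ℝ) (hθ : IsUnit (θᵀ * θ))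
    (c : Fin M → Fin K → ℝ) (p : Fin M → ℝ) (hp : ∀ i, 0 ≤ p i)
    (ℓ : Fin M → (Fin d → ℝ) → ℝ)
    (θplus : Matrix (Fin K) (Fin d) ℝ) (hθplus : θplus = (θᵀ * θ)⁻¹ * θᵀ)
    (b : Fin M → Fin d → ℝ) (hb : ∀ i, b i = θ *ᵥ c i)
    (bbar : Fin d → ℝ) (hbbar : bbar = (M : ℝ)⁻¹ • ∑ i, b i) :
    ∑ i, p i * ℓ i (θ *ᵥ c i)
      + (1 / (2 * M)) * ∑ i, ∑ j, ∑ k, (c i k - c j k) ^ 2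
    = ∑ i, p i * ℓ i (b i)
      + ∑ i, (b i - bbar) ⬝ᵥ ((θplusᵀ * θplus) *ᵥ (b i - bbar)) := by
  have hinv : θplus * θ = 1 := by
    rw [hθplus, Matrix.mul_assoc]
    exact Matrix.nonsing_inv_mul _ ((Matrix.isUnit_iff_isUnit_det _).mp hθ)
  -- cbar
  set cbar : Fin K → ℝ := (M : ℝ)⁻¹ • ∑ i, c i with hcbar
  have hθcbar : θ *ᵥ cbar = bbar := by
    rw [hbbar, hcbar, Matrix.mulVec_smul]
    congr 1
    simp only [hb]
    exact map_sum θ.mulVecLin c Finset.univ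
  have hv : ∀ i, θplus *ᵥ (b i - bbar) = c i - cbar := by
    intro i
    rw [hb, ← hθcbar, ← Matrix.mulVec_sub, Matrix.mulVec_mulVec, hinv, Matrix.one_mulVec]
  have hq : ∀ i, (b i - bbar) ⬝ᵥ ((θplusᵀ * θplus) *ᵥ (b i - bbar))
      = ∑ k, (c i k - cbar k)^2 := by
    intro i
    rw [← Matrix.mulVec_mulVec, Matrix.dotProduct_mulVec, Matrix.vecMul_transpose, hv]
    simp [dotProduct, sq, Pi.sub_apply]
  have key : (1 / (2 * M)) * (∑ i, ∑ j, ∑ k, (c i k - c j k) ^ 2 : ℝ)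
      = ∑ i, ∑ k, (c i k - cbar k)^2 := by
    have swap : (∑ i : Fin M, ∑ j : Fin M, ∑ k, (c i k - c j k) ^ 2 : ℝ)
        = ∑ k, ∑ i : Fin M, ∑ j : Fin M, (c i k - c j k) ^ 2 := by
      have step : (∑ i : Fin M, ∑ j : Fin M, ∑ k, (c i k - c j k) ^ 2 : ℝ)
          = ∑ i : Fin M, ∑ k, ∑ j : Fin M, (c i k - c j k) ^ 2 :=
        Finset.sum_congr rfl fun i _ => Finset.sum_comm
      rw [step]
      exact Finset.sum_comm
    have swap2 : (∑ i : Fin M, ∑ k, (c i k - cbar k)^2 : ℝ)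
        = ∑ k, ∑ i : Fin M, (c i k - cbar k)^2 := Finset.sum_comm
    rw [swap, swap2, Finset.mul_sum]
    refine Finset.sum_congr rfl fun k _ => ?_
    have := scal M hM (fun i => c i k)
    convert this using 2
    simp [hcbar, Finset.sum_apply]
  simp only [hb] at *
  rw [key]
  congr 1
  exact Finset.sum_congr rfl fun i _ => (hq i).symm
end

section
/- Let W be a symmetric positive semi-definite real M×M matrix with entries w_ij, let d_ii = Σ_{j=1}^M w_ij, and let c₁,…,c_M and c₁ᵗ,…,c_Mᵗ be vectors in ℝ^K. Define F_reg(c₁,…,c_M) = Σ_i d_ii ⟨c_i, c_i⟩ − Σ_{i,j} w_ij ⟨c_i, c_j⟩ and the surrogate S(c₁,…,c_M) = Σ_i d_ii ⟨c_i, c_i⟩ − Σ_{i,j} w_ij ⟨c_iᵗ, c_jᵗ⟩ − 2 Σ_i ⟨Σ_j w_ij c_jᵗ, c_i − c_iᵗ⟩. Then S(c₁,…,c_M) ≥ F_reg(c₁,…,c_M) for all choices of c₁,…,c_M, with equality when c_i = c_iᵗ for every i. -/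
open Matrix Finset

lemma helper_swap {M : ℕ} (W : Matrix (Fin M) (Fin M) ℝ)
    (hsym : ∀ i j, W i j = W j i) (x y : Fin M → ℝ) :
    ∑ i, ∑ j, W i j * (x i * y j) = ∑ i, ∑ j, W i j * (y i * x j) := by
  rw [Finset.sum_comm]
  exact Finset.sum_congr rfl fun j _ => Finset.sum_congr rfl fun i _ => by
    rw [hsym]; ring

lemma helper_quad {M : ℕ} (W : Matrix (Fin M) (Fin M) ℝ)
    (hsym : ∀ i j, W i j = W j i) (x y : Fin M → ℝ) :
    ∑ i, ∑ j, W i j * (x i * x j) - ∑ i, ∑ j, W i j * (y i * y j)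
      - 2 * ∑ i, (∑ j, W i j * y j) * (x i - y i)
    = ∑ i, ∑ j, W i j * ((x i - y i) * (x j - y j)) := by
  have h1 : ∑ i, ∑ j, W i j * ((x i - y i) * (x j - y j))
      = ∑ i, ∑ j, W i j * (x i * x j) - ∑ i, ∑ j, W i j * (x i * y j)
        - ∑ i, ∑ j, W i j * (y i * x j) + ∑ i, ∑ j, W i j * (y i * y j) := by
    simp only [← Finset.sum_sub_distrib, ← Finset.sum_add_distrib]
    exact Finset.sum_congr rfl fun i _ => Finset.sum_congr rfl fun j _ => by ring
  have h2 : ∑ i, (∑ j, W i j * y j) * (x i - y i)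
      = ∑ i, ∑ j, W i j * (x i * y j) - ∑ i, ∑ j, W i j * (y i * y j) := by
    simp only [← Finset.sum_sub_distrib]
    refine Finset.sum_congr rfl fun i _ => ?_
    rw [Finset.sum_mul]
    exact Finset.sum_congr rfl fun j _ => by ring
  have h3 := helper_swap W hsym x y
  linarith [h1, h2, h3]

/-- Majorization property of the MM surrogate for the Laplacian regularizer:
S(c) ≥ F_reg(c) for all c, with equality at c = cᵗ. -/
theorem stmt_3 (M K : ℕ) (W : Matrix (Fin M) (Fin M) ℝ) (hW : W.PosSemidef)
    (dg : Fin M → ℝ) (hdg : ∀ i, dg i = ∑ j, W i j)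
    (Freg S : (Fin M → Fin K → ℝ) → ℝ)
    (ct : Fin M → Fin K → ℝ)
    (hFreg : ∀ c, Freg c
      = ∑ i, dg i * (c i ⬝ᵥ c i) - ∑ i, ∑ j, W i j * (c i ⬝ᵥ c j))
    (hS : ∀ c, S c
      = ∑ i, dg i * (c i ⬝ᵥ c i) - ∑ i, ∑ j, W i j * (ct i ⬝ᵥ ct j)
        - 2 * ∑ i, (∑ j, W i j • ct j) ⬝ᵥ (c i - ct i)) :
    (∀ c : Fin M → Fin K → ℝ, Freg c ≤ S c) ∧ S ct = Freg ct := by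
  have hsym : ∀ i j, W i j = W j i := fun i j => by
    have := hW.1
    calc W i j = Wᴴ i j := by rw [this]
    _ = W j i := by simp [Matrix.conjTranspose_apply]
  -- triple sum rearrangement
  have tsum : ∀ c : Fin M → Fin K → ℝ,
      ∑ i, ∑ j, W i j * (c i ⬝ᵥ c j)
        = ∑ k, ∑ i, ∑ j, W i j * (c i k * c j k) := by
    intro c
    calc ∑ i, ∑ j, W i j * (c i ⬝ᵥ c j)
        = ∑ i, ∑ j, ∑ k, W i j * (c i k * c j k) :=
          Finset.sum_congr rfl fun i _ => Finset.sum_congr rfl fun j _ => by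
            simp [dotProduct, Finset.mul_sum]
      _ = ∑ i, ∑ k, ∑ j, W i j * (c i k * c j k) :=
          Finset.sum_congr rfl fun i _ => by rw [Finset.sum_comm]

      _ = ∑ k, ∑ i, ∑ j, W i j * (c i k * c j k) := by rw [Finset.sum_comm]

  have lin : ∀ c : Fin M → Fin K → ℝ,
      ∑ i, (∑ j, W i j • ct j) ⬝ᵥ (c i - ct i)
        = ∑ k, ∑ i, (∑ j, W i j * ct j k) * (c i k - ct i k) := by
    intro c
    calc ∑ i, (∑ j, W i j • ct j) ⬝ᵥ (c i - ct i)
        = ∑ i, ∑ k, (∑ j, W i j * ct j k) * (c i k - ct i k) :=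
          Finset.sum_congr rfl fun i _ => by
            simp [dotProduct, Finset.sum_apply, Pi.smul_apply]
      _ = ∑ k, ∑ i, (∑ j, W i j * ct j k) * (c i k - ct i k) := by rw [Finset.sum_comm]

  -- key identity
  have key : ∀ c : Fin M → Fin K → ℝ,
      S c = Freg c + ∑ k, ∑ i, ∑ j,
        W i j * ((c i k - ct i k) * (c j k - ct j k)) := by
    intro c
    rw [hS, hFreg]
    have : ∑ k, ∑ i, ∑ j, W i j * ((c i k - ct i k) * (c j k - ct j k))
        = ∑ k, (∑ i, ∑ j, W i j * (c i k * c j k)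
            - ∑ i, ∑ j, W i j * (ct i k * ct j k)
            - 2 * ∑ i, (∑ j, W i j * ct j k) * (c i k - ct i k)) := by
      exact Finset.sum_congr rfl fun k _ =>
        (helper_quad W hsym (fun i => c i k) (fun i => ct i k)).symm
    rw [this, tsum c, tsum ct, lin c]
    rw [Finset.sum_sub_distrib, Finset.sum_sub_distrib, Finset.mul_sum]
    ring
  -- nonnegativity per coordinate
  have nonneg : ∀ (x : Fin M → ℝ), 0 ≤ ∑ i, ∑ j, W i j * (x i * x j) := by
    intro x
    have h := hW.dotProduct_mulVec_nonneg x
    have hx : star x ⬝ᵥ W *ᵥ x = ∑ i, ∑ j, W i j * (x i * x j) := by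
      simp [dotProduct, Matrix.mulVec, Finset.mul_sum]
      exact Finset.sum_congr rfl fun i _ => Finset.sum_congr rfl fun j _ => by ring
    rw [hx] at h
    exact h
  constructor
  · intro c
    rw [key c]
    have : 0 ≤ ∑ k, ∑ i, ∑ j, W i j * ((c i k - ct i k) * (c j k - ct j k)) :=
      Finset.sum_nonneg fun k _ => nonneg fun i => c i k - ct i k
    linarith
  · rw [key ct]
    simp
end

section
/- Let c ∈ Δ^K have all coordinates strictly positive, let g ∈ ℝ^K and η > 0, and let c⁺ = MD(c, g, η) be the entropic mirror descent step. Then ⟨g, (c − c⁺)/η⟩ ≥ ‖(c − c⁺)/η‖₁², where ‖·‖₁ is the ℓ₁ norm on ℝ^K. -/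
open Finset

private lemma md_log_lb {t : ℝ} (ht : 1 ≤ t) : 2*(t-1)/(t+1) ≤ Real.log t := by
  set f : ℝ → ℝ := fun x => Real.log x - 2*(x-1)/(x+1) with hf
  have hder : ∀ x : ℝ, 1 < x → HasDerivAt f (1/x - 4/(x+1)^2) x := by
    intro x hx
    have hx0 : x ≠ 0 := by linarith
    have hne : x + 1 ≠ 0 := by linarith
    have h1 : HasDerivAt Real.log (1/x) x := by
      simpa [one_div] using Real.hasDerivAt_log hx0
    have hn : HasDerivAt (fun x : ℝ => 2*(x-1)) 2 x := by
      simpa using ((hasDerivAt_id x).sub_const 1).const_mul 2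
    have hd : HasDerivAt (fun x : ℝ => x+1) 1 x := (hasDerivAt_id x).add_const 1
    have h2 : HasDerivAt (fun x : ℝ => 2*(x-1)/(x+1)) (4/(x+1)^2) x := by
      have := hn.div hd hne
      rw [show (4:ℝ)/(x+1)^2 = (2 * (x + 1) - 2 * (x - 1) * 1) / (x + 1) ^ 2 by ring]
      exact this
    exact h1.sub h2
  have hmono : MonotoneOn f (Set.Ici 1) := by
    apply monotoneOn_of_deriv_nonneg (convex_Ici 1)
    · apply ContinuousOn.sub
      · refine Real.continuousOn_log.mono (fun x hx => ?_)
        have h1 : (1:ℝ) ≤ x := hx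
        simp only [Set.mem_compl_iff, Set.mem_singleton_iff]
        intro h; rw [h] at h1; linarith
      · apply ContinuousOn.div (by fun_prop) (by fun_prop)
        intro x hx
        have h1 : (1:ℝ) ≤ x := hx
        intro h; linarith
    · intro x hx
      rw [interior_Ici] at hx
      exact (hder x hx).differentiableAt.differentiableWithinAt
    · intro x hx
      rw [interior_Ici] at hx
      rw [(hder x hx).deriv]
      have hx1 : (1:ℝ) < x := hx
      have hx0 : (0:ℝ) < x := by linarith
      have h1 : (0:ℝ) < (x+1)^2 := by positivity
      rw [sub_nonneg, div_le_div_iff₀ h1 hx0]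
      nlinarith [sq_nonneg (x-1)]
  have h0 : f 1 = 0 := by simp [hf]
  have := hmono (Set.self_mem_Ici) (Set.mem_Ici.2 ht) ht
  rw [h0] at this
  simpa [hf, sub_nonneg] using this

private lemma md_klog {a b : ℝ} (ha : 0 < a) (hb : 0 < b) :
    2*(a-b)^2/(a+b) ≤ (a-b)*(Real.log a - Real.log b) := by
  have key : ∀ a b : ℝ, 0 < a → 0 < b → b ≤ a →
      2*(a-b)^2/(a+b) ≤ (a-b)*(Real.log a - Real.log b) := by
    intro a b ha hb hab
    have ht : 1 ≤ a / b := (one_le_div hb).2 hab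
    have hlog : Real.log a - Real.log b = Real.log (a/b) := by
      rw [Real.log_div ha.ne' hb.ne']
    have heq : 2*(a/b-1)/(a/b+1) = 2*(a-b)/(a+b) := by
      rw [div_eq_div_iff (by positivity) (by positivity)]
      field_simp
    have := md_log_lb ht
    rw [heq] at this
    have h1 : (a-b) * (2*(a-b)/(a+b)) ≤ (a-b) * Real.log (a/b) :=
      mul_le_mul_of_nonneg_left this (by linarith)
    rw [hlog]
    calc 2*(a-b)^2/(a+b) = (a-b) * (2*(a-b)/(a+b)) := by ring
      _ ≤ (a-b) * Real.log (a/b) := h1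
  rcases le_total b a with hab | hab
  · exact key a b ha hb hab
  · have := key b a hb ha hab
    have e1 : 2*(b-a)^2/(b+a) = 2*(a-b)^2/(a+b) := by ring_nf
    have e2 : (b-a)*(Real.log b - Real.log a) = (a-b)*(Real.log a - Real.log b) := by ring
    linarith [e1 ▸ e2 ▸ this]

/-- Entropic mirror descent gradient-mapping inequality (Dang–Lan):
⟨g, (c − c⁺)/η⟩ ≥ ‖(c − c⁺)/η‖₁². -/
theorem stmt_6 (K : ℕ) (c : Fin K → ℝ) (hc : c ∈ stdSimplex ℝ (Fin K))
    (hpos : ∀ k, 0 < c k) (g : Fin K → ℝ) (η : ℝ) (hη : 0 < η)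
    (cplus : Fin K → ℝ)
    (hcplus : ∀ k, cplus k
      = c k * Real.exp (-η * g k) / ∑ j, c j * Real.exp (-η * g j)) :
    (∑ k, |(c k - cplus k) / η|) ^ 2 ≤ ∑ k, g k * ((c k - cplus k) / η) := by
  have hc1 : ∑ k, c k = 1 := hc.2
  have hne : (univ : Finset (Fin K)).Nonempty := by
    rcases (univ : Finset (Fin K)).eq_empty_or_nonempty with h | h
    · rw [h, Finset.sum_empty] at hc1; norm_num at hc1
    · exact h
  set Z : ℝ := ∑ j, c j * Real.exp (-η * g j) with hZdef
  have hZ : 0 < Z :=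
    Finset.sum_pos (fun j _ => mul_pos (hpos j) (Real.exp_pos _)) hne
  have hcp : ∀ k, 0 < cplus k := by
    intro k; rw [hcplus k]; exact div_pos (mul_pos (hpos k) (Real.exp_pos _)) hZ
  have hcp1 : ∑ k, cplus k = 1 := by
    have : ∑ k, cplus k = (∑ k, c k * Real.exp (-η * g k)) / Z := by
      rw [Finset.sum_div]; exact Finset.sum_congr rfl fun k _ => hcplus k
    rw [this, ← hZdef, div_self hZ.ne']
  have hlog : ∀ k, Real.log (c k) - Real.log (cplus k) = η * g k + Real.log Z := by
    intro k
    rw [hcplus k, Real.log_div (mul_pos (hpos k) (Real.exp_pos _)).ne' hZ.ne',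
      Real.log_mul (hpos k).ne' (Real.exp_pos _).ne', Real.log_exp]
    ring
  set A : ℝ := ∑ k, (c k - cplus k) * (Real.log (c k) - Real.log (cplus k)) with hA
  have hAeq : A = η * ∑ k, g k * (c k - cplus k) := by
    rw [hA, Finset.mul_sum]
    have : ∀ k ∈ univ, (c k - cplus k) * (Real.log (c k) - Real.log (cplus k))
        = η * (g k * (c k - cplus k)) + Real.log Z * (c k - cplus k) := by
      intro k _; rw [hlog k]; ring
    rw [Finset.sum_congr rfl this, Finset.sum_add_distrib]
    have h2 : ∑ x, Real.log Z * (c x - cplus x) = Real.log Z * ∑ x, (c x - cplus x) := by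
      rw [Finset.mul_sum]
    rw [h2, Finset.sum_sub_distrib, hc1, hcp1]
    simp
  -- Pinsker-type bound
  have hpinsker : (∑ k, |c k - cplus k|) ^ 2 ≤ A := by
    have hCS := Finset.sum_mul_sq_le_sq_mul_sq univ
      (fun k => Real.sqrt ((c k + cplus k) / 2))
      (fun k => |c k - cplus k| / Real.sqrt ((c k + cplus k) / 2))
    have hs : ∀ k, (0:ℝ) < (c k + cplus k) / 2 := by
      intro k; have := hpos k; have := hcp k; linarith
    have e1 : ∀ k ∈ univ, Real.sqrt ((c k + cplus k) / 2) *
        (|c k - cplus k| / Real.sqrt ((c k + cplus k) / 2)) = |c k - cplus k| := by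
      intro k _
      rw [mul_div_cancel₀]
      exact (Real.sqrt_pos.2 (hs k)).ne'
    have e2 : ∀ k ∈ univ, Real.sqrt ((c k + cplus k) / 2) ^ 2 = (c k + cplus k) / 2 := by
      intro k _; exact Real.sq_sqrt (hs k).le
    have e3 : ∑ k, (c k + cplus k) / 2 = 1 := by
      rw [← Finset.sum_div, Finset.sum_add_distrib, hc1, hcp1]; norm_num
    rw [Finset.sum_congr rfl e1, Finset.sum_congr rfl e2, e3, one_mul] at hCS
    refine hCS.trans (Finset.sum_le_sum fun k _ => ?_)
    have hk := md_klog (hpos k) (hcp k)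
    have hv : (|c k - cplus k| / Real.sqrt ((c k + cplus k) / 2)) ^ 2
        = 2 * (c k - cplus k)^2 / (c k + cplus k) := by
      have h2 : c k + cplus k ≠ 0 := by have := hpos k; have := hcp k; intro h; linarith
      rw [div_pow, sq_abs, Real.sq_sqrt (hs k).le]
      field_simp
    rw [hv]
    exact hk
  -- conclude
  have habs : ∀ k ∈ univ, |(c k - cplus k) / η| = |c k - cplus k| / η := by
    intro k _; rw [abs_div, abs_of_pos hη]
  have hdiv : ∀ k ∈ univ, g k * ((c k - cplus k) / η) = g k * (c k - cplus k) / η := by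
    intro k _; ring
  rw [Finset.sum_congr rfl habs, Finset.sum_congr rfl hdiv, ← Finset.sum_div,
    ← Finset.sum_div, div_pow]
  rw [div_le_div_iff₀ (by positivity) hη]
  have hA2 : ∑ k, g k * (c k - cplus k) = A / η := by
    rw [hAeq]; field_simp
  rw [hA2]
  calc (∑ k, |c k - cplus k|) ^ 2 * η ≤ A * η := by nlinarith [hpinsker, sq_nonneg (∑ k, |c k - cplus k|)]
    _ = A / η * η ^ 2 := by field_simp
end

section
/- Let c ∈ Δ^K have all coordinates strictly positive, let η > 0, and let g, g' ∈ ℝ^K. Let c⁺ = MD(c, g, η) and c⁺' = MD(c, g', η) be the entropic mirror descent steps from the same point c with the two gradients. Then (1/η) ‖c⁺ − c⁺'‖₁ ≤ ‖g − g'‖_∞, where ‖·‖₁ and ‖·‖_∞ are the ℓ₁ and ℓ∞ norms on ℝ^K. -/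
open Finset
set_option maxHeartbeats 1000000

lemma sinh_le_mul_cosh {t : ℝ} (ht : 0 ≤ t) : Real.sinh t ≤ t * Real.cosh t := by
  have hd : ∀ s : ℝ, HasDerivAt (fun s : ℝ => s * Real.cosh s - Real.sinh s)
      (1 * Real.cosh s + s * Real.sinh s - Real.cosh s) s := fun s =>
    ((hasDerivAt_id' s).mul (Real.hasDerivAt_cosh s)).sub (Real.hasDerivAt_sinh s)
  have hmono : MonotoneOn (fun s : ℝ => s * Real.cosh s - Real.sinh s) (Set.Ici 0) := by
    apply monotoneOn_of_deriv_nonneg (convex_Ici 0)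
    · exact ((continuous_id.mul Real.continuous_cosh).sub Real.continuous_sinh).continuousOn
    · intro s _
      exact ((hd s).differentiableAt).differentiableWithinAt
    · intro s hs
      rw [interior_Ici, Set.mem_Ioi] at hs
      rw [(hd s).deriv]
      nlinarith [Real.sinh_nonneg_iff.mpr hs.le]
  have h := hmono (Set.self_mem_Ici) (Set.mem_Ici.mpr ht) ht
  simpa using h

/-- key exp inequality: 2(e^x + e^{-x} - 2) ≤ x(e^x - e^{-x}) for x ≥ 0. -/
lemma two_cosh_le {x : ℝ} (hx : 0 ≤ x) :
    2 * (Real.exp x + Real.exp (-x) - 2) ≤ x * (Real.exp x - Real.exp (-x)) := by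
  have hs := sinh_le_mul_cosh (t := x / 2) (by positivity)
  rw [Real.sinh_eq, Real.cosh_eq] at hs
  set u := Real.exp (x / 2) with hu
  set v := Real.exp (-(x / 2)) with hv
  have huv : u * v = 1 := by rw [hu, hv, ← Real.exp_add]; simp
  have huv2 : v ≤ u := Real.exp_le_exp.mpr (by linarith)
  have hM : Real.exp x = u * u := by rw [hu, ← Real.exp_add]; ring_nf
  have hL : Real.exp (-x) = v * v := by rw [hv, ← Real.exp_add]; ring_nf
  rw [hM, hL]
  nlinarith [hs, huv, huv2]

/-- Nonexpansiveness of the entropic mirror descent step (Dang–Lan):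
(1/η)‖MD(c,g,η) − MD(c,g',η)‖₁ ≤ ‖g − g'‖_∞. -/
theorem stmt_7 (K : ℕ) (c : Fin K → ℝ) (hc : c ∈ stdSimplex ℝ (Fin K))
    (hpos : ∀ k, 0 < c k) (η : ℝ) (hη : 0 < η) (g g' : Fin K → ℝ)
    (cplus cplus' : Fin K → ℝ)
    (hcplus : ∀ k, cplus k
      = c k * Real.exp (-η * g k) / ∑ j, c j * Real.exp (-η * g j))
    (hcplus' : ∀ k, cplus' k
      = c k * Real.exp (-η * g' k) / ∑ j, c j * Real.exp (-η * g' j)) :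
    (1 / η) * ∑ k, |cplus k - cplus' k| ≤ ⨆ k, |g k - g' k| := by
  rcases Nat.eq_zero_or_pos K with hK | hK
  · subst hK
    simp [Real.iSup_of_isEmpty]
  haveI : Nonempty (Fin K) := Fin.pos_iff_nonempty.mp hK
  set δ := ⨆ k, |g k - g' k| with hδdef
  have hbdd : BddAbove (Set.range fun k => |g k - g' k|) :=
    Set.Finite.bddAbove (Set.finite_range _)
  have hδk : ∀ k, |g k - g' k| ≤ δ := fun k => le_ciSup hbdd k
  have hδ0 : 0 ≤ δ := le_trans (abs_nonneg _) (hδk (Classical.arbitrary _))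
  rcases eq_or_lt_of_le hδ0 with hδeq | hδpos
  · -- δ = 0 : g = g'
    have hgg : g = g' := by
      funext k
      have := hδk k
      rw [← hδeq] at this
      have := abs_nonpos_iff.mp this
      linarith [sub_eq_zero.mp this]
    have : ∀ k, cplus k = cplus' k := by
      intro k; rw [hcplus k, hcplus' k, hgg]
    simp only [this, sub_self, abs_zero, Finset.sum_const_zero, mul_zero]
    exact hδ0
  -- main case
  set a : Fin K → ℝ := fun k => c k * Real.exp (-η * g k) with ha
  set b : Fin K → ℝ := fun k => c k * Real.exp (-η * g' k) with hb
  have hak : ∀ k, 0 < a k := fun k => mul_pos (hpos k) (Real.exp_pos _)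
  have hbk : ∀ k, 0 < b k := fun k => mul_pos (hpos k) (Real.exp_pos _)
  set A := ∑ j, a j with hAdef
  set B := ∑ j, b j with hBdef
  have hA : 0 < A := Finset.sum_pos (fun j _ => hak j) univ_nonempty
  have hB : 0 < B := Finset.sum_pos (fun j _ => hbk j) univ_nonempty
  set x := η * δ with hxdef
  have hx : 0 < x := mul_pos hη hδpos
  set L := Real.exp (-x) with hLdef
  set M := Real.exp x with hMdef
  have hL0 : 0 < L := Real.exp_pos _
  have hML : L < M := Real.exp_lt_exp.mpr (by linarith)
  have hML1 : M * L = 1 := by rw [hMdef, hLdef, ← Real.exp_add]; simp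
  set r : Fin K → ℝ := fun k => Real.exp (η * (g k - g' k)) with hr
  have hbar : ∀ k, b k = a k * r k := by
    intro k
    simp only [ha, hb, hr, mul_assoc, ← Real.exp_add]
    ring_nf
  have hrL : ∀ k, L ≤ r k := by
    intro k
    apply Real.exp_le_exp.mpr
    have := (abs_le.mp (hδk k)).1
    nlinarith
  have hrM : ∀ k, r k ≤ M := by
    intro k
    apply Real.exp_le_exp.mpr
    have := (abs_le.mp (hδk k)).2
    nlinarith
  set R := B / A with hRdef
  have hBeq : B = ∑ k, a k * r k := by
    rw [hBdef]; exact Finset.sum_congr rfl fun k _ => hbar k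
  have hR1 : L ≤ R := by
    rw [hRdef, le_div_iff₀ hA]
    rw [hBeq, hAdef, Finset.mul_sum]
    apply Finset.sum_le_sum
    intro k _
    rw [mul_comm]
    exact mul_le_mul_of_nonneg_left (hrL k) (hak k).le
  have hR2 : R ≤ M := by
    rw [hRdef, div_le_iff₀ hA]
    rw [hBeq, hAdef, Finset.mul_sum]
    apply Finset.sum_le_sum
    intro k _
    rw [mul_comm (M : ℝ)]
    exact mul_le_mul_of_nonneg_left (hrM k) (hak k).le
  have hRpos : 0 < R := div_pos hB hA
  set p : Fin K → ℝ := fun k => a k / A with hp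
  have hpk : ∀ k, 0 < p k := fun k => div_pos (hak k) hA
  have hpsum : ∑ k, p k = 1 := by
    rw [hp]; rw [← Finset.sum_div, ← hAdef, div_self hA.ne']
  have hprsum : ∑ k, p k * r k = R := by
    have : ∀ k, p k * r k = a k * r k / A := fun k => by rw [hp]; ring
    rw [Finset.sum_congr rfl fun k _ => this k, ← Finset.sum_div, ← hBeq, hRdef]
  -- key pointwise identity
  have key : ∀ k, cplus k - cplus' k = p k * (R - r k) / R := by
    intro k
    have e1 : cplus k = a k / A := hcplus k
    have e2 : cplus' k = a k * r k / B := by rw [hcplus' k, ← hbar k]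
    rw [e1, e2, hp, hRdef]
    field_simp
  -- sums
  set T := ∑ k, p k * max (r k - R) 0 with hT
  set T' := ∑ k, p k * max (R - r k) 0 with hT'
  have hTT' : T = T' := by
    have h0 : T - T' = ∑ k, p k * (r k - R) := by
      rw [hT, hT', ← Finset.sum_sub_distrib]
      apply Finset.sum_congr rfl
      intro k _
      rcases le_total (r k) R with h | h
      · rw [max_eq_right (by linarith), max_eq_left (by linarith)]; ring
      · rw [max_eq_left (by linarith), max_eq_right (by linarith)]; ring
    have h1 : ∑ k, p k * (r k - R) = 0 := by
      simp only [mul_sub]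
      rw [Finset.sum_sub_distrib, hprsum, ← Finset.sum_mul, hpsum]
      ring
    linarith [h0, h1]
  have habs : ∑ k, p k * |r k - R| = 2 * T := by
    have : ∀ k, p k * |r k - R| = p k * max (r k - R) 0 + p k * max (R - r k) 0 := by
      intro k
      rcases le_total (r k) R with h | h
      · rw [abs_of_nonpos (by linarith), max_eq_right (by linarith),
          max_eq_left (by linarith)]; ring
      · rw [abs_of_nonneg (by linarith), max_eq_left (by linarith),
          max_eq_right (by linarith)]; ring
    rw [Finset.sum_congr rfl fun k _ => this k, Finset.sum_add_distrib, ← hT, ← hT', ← hTT']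
    ring
  -- filter bounds
  set F := Finset.univ.filter (fun k => R < r k) with hF
  set P := ∑ k ∈ F, p k with hPdef
  have hP0 : 0 ≤ P := Finset.sum_nonneg fun k _ => (hpk k).le
  have hPcompl : ∑ k ∈ Finset.univ.filter (fun k => ¬ R < r k), p k = 1 - P := by
    have := Finset.sum_filter_add_sum_filter_not Finset.univ (fun k => R < r k) p
    rw [← hF, ← hPdef] at this
    linarith [this, hpsum]
  have hbound1 : T ≤ P * (M - R) := by
    have hT_eq : T = ∑ k ∈ F, p k * (r k - R) := by
      rw [hF, Finset.sum_filter, hT]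
      apply Finset.sum_congr rfl
      intro k _
      by_cases h : R < r k
      · rw [if_pos h, max_eq_left (by linarith)]
      · push_neg at h
        rw [if_neg (not_lt.mpr h), max_eq_right (by linarith), mul_zero]
    rw [hT_eq, hPdef, Finset.sum_mul]
    apply Finset.sum_le_sum
    intro k _
    exact mul_le_mul_of_nonneg_left (by linarith [hrM k]) (hpk k).le
  have hbound2 : T ≤ (1 - P) * (R - L) := by
    rw [hTT']
    have hT'_eq : T' = ∑ k ∈ Finset.univ.filter (fun k => ¬ R < r k), p k * (R - r k) := by
      rw [Finset.sum_filter, hT']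
      apply Finset.sum_congr rfl
      intro k _
      by_cases h : R < r k
      · rw [if_neg (by simpa using h), max_eq_right (by linarith), mul_zero]
      · push_neg at h
        rw [if_pos (by simpa using not_lt.mpr h), max_eq_left (by linarith)]
    rw [hT'_eq, ← hPcompl, Finset.sum_mul]
    apply Finset.sum_le_sum
    intro k _
    exact mul_le_mul_of_nonneg_left (by linarith [hrL k]) (hpk k).le
  have hstep2 : 2 * (M + L - 2) ≤ x * (M - L) := by
    rw [hMdef, hLdef]; exact two_cosh_le hx.le
  clear_value δ a b A B x L M r R p T T' F P
  -- combine: T*(M-L) ≤ (M-R)*(R-L)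
  have hcomb : T * (M - L) ≤ (M - R) * (R - L) := by
    nlinarith [mul_le_mul_of_nonneg_right hbound1 (sub_nonneg.mpr hR1),
      mul_le_mul_of_nonneg_right hbound2 (sub_nonneg.mpr hR2)]
  -- algebra: (M-R)*(R-L) ≤ R*(M+L-2) using M*L = 1 and (R-1)^2 ≥ 0
  have hstep1 : (M - R) * (R - L) ≤ R * (M + L - 2) := by
    nlinarith [sq_nonneg (R - 1), hML1]
  have hfin : 2 * T ≤ R * x := by
    have e4 : R * (2 * (M + L - 2)) ≤ R * (x * (M - L)) :=
      mul_le_mul_of_nonneg_left hstep2 hRpos.le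
    have e5 : (2 * T) * (M - L) ≤ (R * x) * (M - L) := by linarith [hcomb, hstep1, e4]
    exact le_of_mul_le_mul_right e5 (by linarith)
  -- final assembly
  have hsum : ∑ k, |cplus k - cplus' k| = 2 * T / R := by
    have : ∀ k, |cplus k - cplus' k| = p k * |r k - R| / R := by
      intro k
      rw [key k, abs_div, abs_mul, abs_of_pos (hpk k), abs_of_pos hRpos, abs_sub_comm]
    rw [Finset.sum_congr rfl fun k _ => this k, ← Finset.sum_div, habs]
  rw [hsum]
  calc (1 / η) * (2 * T / R) ≤ (1 / η) * ((R * x) / R) := by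
        apply mul_le_mul_of_nonneg_left _ (by positivity)
        exact div_le_div_of_nonneg_right hfin hRpos.le
    _ = δ := by
        rw [hxdef]
        field_simp
end

section
/- Let f : ℝ^d → ℝ be differentiable with L-Lipschitz gradient (‖∇f(x) − ∇f(y)‖ ≤ L‖x − y‖ for all x, y), let E be a positive integer, and let 0 < η ≤ 1/(2EL). Define the local gradient descent iterates θ_0 = θ and θ_{τ+1} = θ_τ − η ∇f(θ_τ) for 0 ≤ τ < E. Then Σ_{τ=0}^{E−1} ‖θ_τ − θ‖² ≤ 16 E³ η² ‖∇f(θ)‖², where ‖·‖ is the Euclidean norm. -/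
set_option maxHeartbeats 1000000

open Finset

/-- Client-drift bound (Lemma O4, full-gradient case): after E local gradient
descent steps with step size η ≤ 1/(2EL) on an L-smooth objective,
Σ_{τ<E} ‖θ_τ − θ‖² ≤ 16E³η²‖∇f(θ)‖². -/
theorem stmt_10 (d : ℕ) (f : EuclideanSpace ℝ (Fin d) → ℝ) (L : ℝ)
    (hdiff : Differentiable ℝ f)
    (hLip : ∀ x y, ‖gradient f x - gradient f y‖ ≤ L * ‖x - y‖)
    (E : ℕ) (hE : 0 < E) (η : ℝ) (hη : 0 < η)
    (hη2 : η ≤ 1 / (2 * (E : ℝ) * L))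
    (θ0 : EuclideanSpace ℝ (Fin d)) (θ : ℕ → EuclideanSpace ℝ (Fin d))
    (h0 : θ 0 = θ0)
    (hstep : ∀ τ, τ < E → θ (τ + 1) = θ τ - η • gradient f (θ τ)) :
    ∑ τ ∈ Finset.range E, ‖θ τ - θ0‖ ^ 2
      ≤ 16 * (E : ℝ) ^ 3 * η ^ 2 * ‖gradient f θ0‖ ^ 2 := by
  set G := ‖gradient f θ0‖ with hG
  have hGnn : 0 ≤ G := norm_nonneg _
  have hEpos : (0:ℝ) < E := by exact_mod_cast hE
  -- L > 0
  have hL : 0 < L := by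
    by_contra h
    push_neg at h
    have h2 : 2 * (E:ℝ) * L ≤ 0 := by nlinarith
    have : 1 / (2 * (E:ℝ) * L) ≤ 0 := one_div_nonpos.mpr h2
    linarith
  have hden : 0 < 2 * (E:ℝ) * L := by positivity
  have hkey : η * L * (2 * (E:ℝ)) ≤ 1 := by
    rw [le_div_iff₀ hden] at hη2
    nlinarith
  -- drift bound by induction
  have hdrift : ∀ τ, τ ≤ E → ‖θ τ - θ0‖ ≤ 2 * η * τ * G := by
    intro τ
    induction τ with
    | zero => intro _; simp [h0]
    | succ n ih =>
      intro hn1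
      have hn : n < E := Nat.lt_of_succ_le hn1
      have ihn := ih hn.le
      have hstepn := hstep n hn
      have hnorm : ‖θ (n+1) - θ0‖ ≤ ‖θ n - θ0‖ + η * ‖gradient f (θ n)‖ := by
        have : θ (n+1) - θ0 = (θ n - θ0) - η • gradient f (θ n) := by
          rw [hstepn]; abel
        rw [this]
        calc ‖(θ n - θ0) - η • gradient f (θ n)‖
            ≤ ‖θ n - θ0‖ + ‖η • gradient f (θ n)‖ := norm_sub_le _ _
          _ = ‖θ n - θ0‖ + η * ‖gradient f (θ n)‖ := by
              rw [norm_smul, Real.norm_of_nonneg hη.le]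
      have hg : ‖gradient f (θ n)‖ ≤ L * ‖θ n - θ0‖ + G := by
        calc ‖gradient f (θ n)‖
            ≤ ‖gradient f (θ n) - gradient f θ0‖ + G := by
              rw [hG]
              have := norm_sub_norm_le (gradient f (θ n)) (gradient f θ0)
              linarith
          _ ≤ L * ‖θ n - θ0‖ + G := by
              have := hLip (θ n) θ0
              linarith
      have hnE : (n:ℝ) ≤ (E:ℝ) := by exact_mod_cast hn.le
      have hnn : (0:ℝ) ≤ (n:ℝ) := Nat.cast_nonneg n
      have hηL : 0 ≤ η * L := mul_nonneg hη.le hL.le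
      have h3 : η * L * ‖θ n - θ0‖ ≤ η * L * (2 * η * (n:ℝ) * G) :=
        mul_le_mul_of_nonneg_left ihn hηL
      have h4 : η * L * (2 * (n:ℝ)) ≤ 1 := le_trans (by nlinarith) hkey
      have h5 : η * L * (2 * η * (n:ℝ) * G) ≤ η * G := by
        nlinarith [mul_nonneg hη.le hGnn]
      have h6 : η * ‖gradient f (θ n)‖ ≤ η * (L * ‖θ n - θ0‖ + G) :=
        mul_le_mul_of_nonneg_left hg hη.le
      push_cast
      nlinarith [norm_nonneg (θ n - θ0), mul_nonneg hη.le hGnn]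
  -- sum
  calc ∑ τ ∈ Finset.range E, ‖θ τ - θ0‖ ^ 2
      ≤ ∑ τ ∈ Finset.range E, 4 * η^2 * (E:ℝ)^2 * G^2 := by
        apply Finset.sum_le_sum
        intro τ hτ
        have hτE : τ < E := Finset.mem_range.mp hτ
        have h1 := hdrift τ hτE.le
        have hτE' : (τ:ℝ) ≤ (E:ℝ) := by exact_mod_cast hτE.le
        have h2 : ‖θ τ - θ0‖ ≤ 2 * η * E * G := by
          refine h1.trans ?_
          have : (0:ℝ) ≤ τ := Nat.cast_nonneg τ
          nlinarith [mul_nonneg hη.le hGnn]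
        nlinarith [norm_nonneg (θ τ - θ0)]
    _ = (E:ℝ) * (4 * η^2 * (E:ℝ)^2 * G^2) := by
        rw [Finset.sum_const, Finset.card_range, nsmul_eq_mul]
    _ ≤ 16 * (E:ℝ)^3 * η^2 * G^2 := by nlinarith [mul_nonneg (mul_nonneg (pow_nonneg hEpos.le 3) (sq_nonneg η)) (sq_nonneg G)]
end

section
/- Let f₁,…,f_M : ℝ^d → ℝ be differentiable, each with L₁-Lipschitz gradient, let p₁,…,p_M ≥ 0 satisfy Σ_i p_i = 1, and set F = Σ_{i=1}^M p_i f_i. Let E be a positive integer and η > 0. For each client i define the local iterates θ_{i,0} = θ⁰ and θ_{i,τ+1} = θ_{i,τ} − η ∇f_i(θ_{i,τ}) for 0 ≤ τ < E, and define the aggregated update θ⁺ = θ⁰ − η Σ_{i=1}^M p_i Σ_{τ=0}^{E−1} ∇f_i(θ_{i,τ}). Then ‖θ⁺ − θ⁰‖² ≤ 2 E η² L₁² Σ_{i=1}^M p_i Σ_{τ=0}^{E−1} ‖θ_{i,τ} − θ⁰‖² + 2 E² η² ‖∇F(θ⁰)‖², where ‖·‖ is the Euclidean norm. -/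
open Finset

/-- Aggregated-update gap bound (Lemma O3, full-gradient case): in federated
averaging with E local gradient steps per client,
‖θ⁺ − θ⁰‖² ≤ 2Eη²L₁² Σᵢ pᵢ Σ_{τ<E} ‖θ_{i,τ} − θ⁰‖² + 2E²η²‖∇F(θ⁰)‖². -/
theorem stmt_11 (d M : ℕ) (f : Fin M → EuclideanSpace ℝ (Fin d) → ℝ) (L₁ : ℝ)
    (hdiff : ∀ i, Differentiable ℝ (f i))
    (hLip : ∀ i x y, ‖gradient (f i) x - gradient (f i) y‖ ≤ L₁ * ‖x - y‖)
    (p : Fin M → ℝ) (hp : ∀ i, 0 ≤ p i) (hpsum : ∑ i, p i = 1)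
    (F : EuclideanSpace ℝ (Fin d) → ℝ) (hF : ∀ θ, F θ = ∑ i, p i * f i θ)
    (E : ℕ) (hE : 0 < E) (η : ℝ) (hη : 0 < η)
    (θ0 : EuclideanSpace ℝ (Fin d)) (θloc : Fin M → ℕ → EuclideanSpace ℝ (Fin d))
    (h0 : ∀ i, θloc i 0 = θ0)
    (hstep : ∀ i τ, τ < E →
      θloc i (τ + 1) = θloc i τ - η • gradient (f i) (θloc i τ))
    (θplus : EuclideanSpace ℝ (Fin d))
    (hθplus : θplus
      = θ0 - η • ∑ i, p i • ∑ τ ∈ Finset.range E, gradient (f i) (θloc i τ)) :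
    ‖θplus - θ0‖ ^ 2
      ≤ 2 * (E : ℝ) * η ^ 2 * L₁ ^ 2
          * ∑ i, p i * ∑ τ ∈ Finset.range E, ‖θloc i τ - θ0‖ ^ 2
        + 2 * (E : ℝ) ^ 2 * η ^ 2 * ‖gradient F θ0‖ ^ 2 := by
  -- gradient of F
  have hFeq : F = fun θ => ∑ i, p i * f i θ := funext hF
  have hgradF : gradient F θ0 = ∑ i, p i • gradient (f i) θ0 := by
    have hfd : fderiv ℝ F θ0 = ∑ i, p i • fderiv ℝ (f i) θ0 := by
      rw [hFeq]
      rw [fderiv_fun_sum (fun i _ => ((hdiff i θ0).const_mul (p i)))]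
      exact Finset.sum_congr rfl fun i _ => fderiv_const_mul (hdiff i θ0) (p i)
    rw [gradient, hfd, map_sum]
    exact Finset.sum_congr rfl fun i _ => by rw [map_smul]; rfl
  set g : Fin M → ℕ → EuclideanSpace ℝ (Fin d) :=
    fun i τ => gradient (f i) (θloc i τ) - gradient (f i) θ0 with hg
  set A : EuclideanSpace ℝ (Fin d) := ∑ i, p i • ∑ τ ∈ Finset.range E, g i τ with hA
  have hdecomp : θplus - θ0 = -(η • (A + (E : ℝ) • gradient F θ0)) := by
    rw [hθplus, hgradF]
    have : (∑ i, p i • ∑ τ ∈ Finset.range E, gradient (f i) (θloc i τ))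
        = A + (E : ℝ) • ∑ i, p i • gradient (f i) θ0 := by
      rw [hA, Finset.smul_sum, ← Finset.sum_add_distrib]
      refine Finset.sum_congr rfl fun i _ => ?_
      rw [smul_comm ((E : ℝ)), ← smul_add]
      congr 1
      simp only [hg]
      rw [Finset.sum_sub_distrib, Finset.sum_const, Finset.card_range,
        ← Nat.cast_smul_eq_nsmul ℝ]
      abel
    rw [this]
    abel
  -- norm bound on A
  have hAnorm : ‖A‖ ^ 2 ≤ (E : ℝ) * ∑ i, p i * ∑ τ ∈ Finset.range E, ‖g i τ‖ ^ 2 := by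
    have h1 : ‖A‖ ≤ ∑ i, ∑ τ ∈ Finset.range E, p i * ‖g i τ‖ := by
      refine (norm_sum_le _ _).trans (Finset.sum_le_sum fun i _ => ?_)
      rw [norm_smul, Real.norm_eq_abs, abs_of_nonneg (hp i), ← Finset.mul_sum]
      exact mul_le_mul_of_nonneg_left (norm_sum_le _ _) (hp i)
    have h2 : (∑ i, ∑ τ ∈ Finset.range E, p i * ‖g i τ‖) ^ 2
        ≤ (E : ℝ) * ∑ i, p i * ∑ τ ∈ Finset.range E, ‖g i τ‖ ^ 2 := by
      have key := sum_mul_sq_le_sq_mul_sq (Finset.univ ×ˢ Finset.range E)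
        (fun x => Real.sqrt (p x.1)) (fun x => Real.sqrt (p x.1) * ‖g x.1 x.2‖)
      have e1 : ∀ x : Fin M × ℕ, Real.sqrt (p x.1) * (Real.sqrt (p x.1) * ‖g x.1 x.2‖)
          = p x.1 * ‖g x.1 x.2‖ := fun x => by
        rw [← mul_assoc, Real.mul_self_sqrt (hp x.1)]
      have e2 : ∀ x : Fin M × ℕ, (Real.sqrt (p x.1)) ^ 2 = p x.1 := fun x =>
        Real.sq_sqrt (hp x.1)
      have e3 : ∀ x : Fin M × ℕ, (Real.sqrt (p x.1) * ‖g x.1 x.2‖) ^ 2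
          = p x.1 * ‖g x.1 x.2‖ ^ 2 := fun x => by
        rw [mul_pow, e2]
      simp only [e1, e2, e3] at key
      calc (∑ i, ∑ τ ∈ Finset.range E, p i * ‖g i τ‖) ^ 2
          = (∑ x ∈ Finset.univ ×ˢ Finset.range E, p x.1 * ‖g x.1 x.2‖) ^ 2 := by
            rw [Finset.sum_product]
        _ ≤ (∑ x ∈ Finset.univ ×ˢ Finset.range E, p x.1)
              * ∑ x ∈ Finset.univ ×ˢ Finset.range E, p x.1 * ‖g x.1 x.2‖ ^ 2 := key
        _ = (E : ℝ) * ∑ i, p i * ∑ τ ∈ Finset.range E, ‖g i τ‖ ^ 2 := by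
            rw [Finset.sum_product, Finset.sum_product]
            congr 1
            · simp [hpsum, Finset.sum_const, Finset.card_range, mul_comm]
              rw [← Finset.sum_mul, hpsum, one_mul]
            · exact Finset.sum_congr rfl fun i _ => by rw [Finset.mul_sum]
    calc ‖A‖ ^ 2 ≤ (∑ i, ∑ τ ∈ Finset.range E, p i * ‖g i τ‖) ^ 2 :=
          pow_le_pow_left₀ (norm_nonneg _) h1 2
      _ ≤ _ := h2
  have hgle : ∀ i τ, ‖g i τ‖ ^ 2 ≤ L₁ ^ 2 * ‖θloc i τ - θ0‖ ^ 2 := fun i τ => by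
    have := hLip i (θloc i τ) θ0
    calc ‖g i τ‖ ^ 2 ≤ (L₁ * ‖θloc i τ - θ0‖) ^ 2 := pow_le_pow_left₀ (norm_nonneg _) this 2
      _ = L₁ ^ 2 * ‖θloc i τ - θ0‖ ^ 2 := by ring
  have hAnorm2 : ‖A‖ ^ 2
      ≤ (E : ℝ) * L₁ ^ 2 * ∑ i, p i * ∑ τ ∈ Finset.range E, ‖θloc i τ - θ0‖ ^ 2 := by
    refine hAnorm.trans ?_
    rw [mul_assoc]
    refine mul_le_mul_of_nonneg_left ?_ (Nat.cast_nonneg E)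
    rw [Finset.mul_sum]
    refine Finset.sum_le_sum fun i _ => ?_
    calc p i * ∑ τ ∈ Finset.range E, ‖g i τ‖ ^ 2
        ≤ p i * ∑ τ ∈ Finset.range E, L₁ ^ 2 * ‖θloc i τ - θ0‖ ^ 2 :=
          mul_le_mul_of_nonneg_left (Finset.sum_le_sum fun τ _ => hgle i τ) (hp i)
      _ = L₁ ^ 2 * (p i * ∑ τ ∈ Finset.range E, ‖θloc i τ - θ0‖ ^ 2) := by
          rw [← Finset.mul_sum]; ring
  -- finish
  have hBnorm : ‖(E : ℝ) • gradient F θ0‖ = (E : ℝ) * ‖gradient F θ0‖ := by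
    rw [norm_smul, Real.norm_eq_abs, abs_of_nonneg (Nat.cast_nonneg E)]
  have htri : ‖A + (E : ℝ) • gradient F θ0‖ ^ 2
      ≤ 2 * ‖A‖ ^ 2 + 2 * ((E : ℝ) * ‖gradient F θ0‖) ^ 2 := by
    have h := norm_add_le A ((E : ℝ) • gradient F θ0)
    rw [hBnorm] at h
    nlinarith [norm_nonneg A, norm_nonneg ((E : ℝ) • gradient F θ0), norm_nonneg (A + (E : ℝ) • gradient F θ0), sq_nonneg (‖A‖ - (E : ℝ) * ‖gradient F θ0‖)]
  calc ‖θplus - θ0‖ ^ 2 = η ^ 2 * ‖A + (E : ℝ) • gradient F θ0‖ ^ 2 := by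
        rw [hdecomp, norm_neg, norm_smul, Real.norm_eq_abs, abs_of_pos hη, mul_pow]
    _ ≤ η ^ 2 * (2 * ‖A‖ ^ 2 + 2 * ((E : ℝ) * ‖gradient F θ0‖) ^ 2) :=
        mul_le_mul_of_nonneg_left htri (sq_nonneg η)
    _ ≤ η ^ 2 * (2 * ((E : ℝ) * L₁ ^ 2 * ∑ i, p i * ∑ τ ∈ Finset.range E, ‖θloc i τ - θ0‖ ^ 2) + 2 * ((E : ℝ) * ‖gradient F θ0‖) ^ 2) := by
        nlinarith [hAnorm2, sq_nonneg η]
    _ = 2 * (E : ℝ) * η ^ 2 * L₁ ^ 2 * ∑ i, p i * ∑ τ ∈ Finset.range E, ‖θloc i τ - θ0‖ ^ 2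
        + 2 * (E : ℝ) ^ 2 * η ^ 2 * ‖gradient F θ0‖ ^ 2 := by ring
end

section
/- Let f₁,…,f_M : ℝ^d → ℝ be differentiable, each with L₁-Lipschitz gradient, let p₁,…,p_M ≥ 0 satisfy Σ_i p_i = 1, and set F = Σ_{i=1}^M p_i f_i. Assume bounded gradient diversity: there is δ ≥ 0 with Σ_{i=1}^M p_i ‖∇f_i(θ) − ∇F(θ)‖² ≤ δ² for all θ ∈ ℝ^d. Let E be a positive integer and 0 < η ≤ 1/(2EL₁). Define θ_{i,0} = θ⁰, θ_{i,τ+1} = θ_{i,τ} − η ∇f_i(θ_{i,τ}) for 0 ≤ τ < E, and θ⁺ = θ⁰ − η Σ_i p_i Σ_{τ=0}^{E−1} ∇f_i(θ_{i,τ}). Then F(θ⁺) − F(θ⁰) ≤ −(Eη/2)(1 − 2EηL₁ − 64E²η²L₁²) ‖∇F(θ⁰)‖² + 32 E³ η³ L₁² δ², where ‖·‖ is the Euclidean norm. -/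
open Finset

section Helpers

open InnerProductSpace

variable {H : Type*} [NormedAddCommGroup H] [InnerProductSpace ℝ H] [CompleteSpace H]

lemma fderiv_apply_eq_inner_gradient (F : H → ℝ) (hd : Differentiable ℝ F) (y v : H) :
    fderiv ℝ F y v = inner ℝ (gradient F y) v := by
  rw [gradient]; rw [← InnerProductSpace.toDual_apply_apply, (toDual ℝ H).apply_symm_apply]

lemma hasDerivAt_comp_line (F : H → ℝ) (hd : Differentiable ℝ F) (x v : H) (t : ℝ) :
    HasDerivAt (fun s : ℝ => F (x + s • v)) (inner ℝ (gradient F (x + t • v)) v) t := by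
  have hc : HasDerivAt (fun s : ℝ => x + s • v) v t :=
    by simpa using ((hasDerivAt_id t).smul_const v).const_add x
  have := (hd (x + t • v)).hasFDerivAt.comp_hasDerivAt t hc
  rw [← fderiv_apply_eq_inner_gradient F hd]; exact this

lemma descent_lemma (F : H → ℝ) (L : ℝ)
    (hd : Differentiable ℝ F)
    (hlip : ∀ x y, ‖gradient F x - gradient F y‖ ≤ L * ‖x - y‖) (x v : H) :
    F (x + v) ≤ F x + inner ℝ (gradient F x) v + L / 2 * ‖v‖ ^ 2 := by
  set c : ℝ := inner ℝ (gradient F x) v with hc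
  set h : ℝ → ℝ := fun t => F (x + t • v) - t * c - L / 2 * t ^ 2 * ‖v‖ ^ 2 with hh
  have hder : ∀ t : ℝ, HasDerivAt h
      (inner ℝ (gradient F (x + t • v)) v - c - L * t * ‖v‖ ^ 2) t := by
    intro t
    have h1 := hasDerivAt_comp_line F hd x v t
    have h2 : HasDerivAt (fun s : ℝ => s * c) c t := by simpa using (hasDerivAt_id t).mul_const c
    have h3 : HasDerivAt (fun s : ℝ => L / 2 * s ^ 2 * ‖v‖ ^ 2) (L * t * ‖v‖ ^ 2) t := by
      have := ((hasDerivAt_pow 2 t).const_mul (L / 2)).mul_const (‖v‖ ^ 2)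
      convert this using 1
      · rfl
      · rfl
      · ring
    exact (h1.sub h2).sub h3
  have hanti : AntitoneOn h (Set.Icc (0:ℝ) 1) := by
    apply antitoneOn_of_deriv_nonpos (convex_Icc 0 1)
    · exact fun t _ => ((hder t).differentiableAt.continuousAt.continuousWithinAt)
    · intro t ht
      exact ((hder t).differentiableAt).differentiableWithinAt
    · intro t ht
      rw [interior_Icc] at ht
      rw [(hder t).deriv]
      have key : inner ℝ (gradient F (x + t • v)) v - c ≤ L * t * ‖v‖ ^ 2 := by
        have h1 : inner ℝ (gradient F (x + t • v)) v - c
            = inner ℝ (gradient F (x + t • v) - gradient F x) v := by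
          rw [inner_sub_left]
        rw [h1]
        calc inner ℝ (gradient F (x + t • v) - gradient F x) v
            ≤ ‖gradient F (x + t • v) - gradient F x‖ * ‖v‖ := real_inner_le_norm _ _
          _ ≤ (L * ‖(x + t • v) - x‖) * ‖v‖ := by
              apply mul_le_mul_of_nonneg_right (hlip _ _) (norm_nonneg _)
          _ = L * t * ‖v‖ ^ 2 := by
              rw [add_sub_cancel_left, norm_smul, Real.norm_eq_abs, abs_of_pos ht.1]
              ring
      linarith
  have := hanti (Set.left_mem_Icc.2 zero_le_one) (Set.right_mem_Icc.2 zero_le_one) zero_le_one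
  simp only [hh, one_smul, zero_smul, add_zero, one_pow, mul_one, one_mul, zero_mul,
    zero_pow, sub_zero, mul_zero] at this
  linarith

lemma hasGradientAt_weighted_sum {M : ℕ} (f : Fin M → H → ℝ) (p : Fin M → ℝ)
    (hdiff : ∀ i, Differentiable ℝ (f i)) (F : H → ℝ)
    (hF : ∀ θ, F θ = ∑ i, p i * f i θ) (θ : H) :
    HasGradientAt F (∑ i, p i • gradient (f i) θ) θ := by
  have hfd : HasFDerivAt F (∑ i, p i • fderiv ℝ (f i) θ) θ := by
    have : HasFDerivAt (fun θ => ∑ i, p i * f i θ) (∑ i, p i • fderiv ℝ (f i) θ) θ :=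
      HasFDerivAt.fun_sum (fun i _ => ((hdiff i θ).hasFDerivAt.const_mul (p i)))
    exact this.congr_of_eventuallyEq (Filter.Eventually.of_forall hF)
  have := hfd.hasGradientAt
  convert this using 1
  rw [map_sum]
  congr 1
  funext i
  rw [map_smul, gradient]

lemma gradient_weighted_sum {M : ℕ} (f : Fin M → H → ℝ) (p : Fin M → ℝ)
    (hdiff : ∀ i, Differentiable ℝ (f i)) (F : H → ℝ)
    (hF : ∀ θ, F θ = ∑ i, p i * f i θ) (θ : H) :
    gradient F θ = ∑ i, p i • gradient (f i) θ :=
  (hasGradientAt_weighted_sum f p hdiff F hF θ).gradient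

lemma arith_core (Ee η L a b δ DF : ℝ) (hE : 1 ≤ Ee) (hη : 0 < η) (hL : 0 < L)
    (ha : 0 ≤ a) (hb : 0 ≤ b) (hδ : 0 ≤ δ)
    (hsmall : 2 * Ee * η * L ≤ 1)
    (hb1 : b ≤ 2 * η * Ee ^ 2 * L * (δ + a))
    (hDF : DF ≤ -Ee * η * a ^ 2 + η * a * b + L / 2 * η ^ 2 * (2 * Ee ^ 2 * a ^ 2 + 2 * b ^ 2)) :
    DF ≤ -(Ee * η / 2) * (1 - 2 * Ee * η * L - 64 * Ee ^ 2 * η ^ 2 * L ^ 2) * a ^ 2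
        + 32 * Ee ^ 3 * η ^ 3 * L ^ 2 * δ ^ 2 := by
  have hE0 : (0:ℝ) < Ee := lt_of_lt_of_le one_pos hE
  have hab : 2 * Ee * (η * a * b) ≤ η * Ee ^ 2 * a ^ 2 + η * b ^ 2 := by
    nlinarith [mul_nonneg hη.le (sq_nonneg (Ee * a - b))]
  have hb2 : b ^ 2 ≤ 8 * Ee ^ 4 * η ^ 2 * L ^ 2 * (δ ^ 2 + a ^ 2) := by
    have h1 : b ^ 2 ≤ (2 * η * Ee ^ 2 * L * (δ + a)) ^ 2 := by
      apply pow_le_pow_left₀ hb hb1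
    nlinarith [sq_nonneg (δ - a), mul_nonneg (mul_nonneg (sq_nonneg (2 * η * Ee ^ 2 * L)) hδ) ha,
      sq_nonneg (2 * η * Ee ^ 2 * L)]
  have hLb : 2 * Ee * (L * η ^ 2 * b ^ 2) ≤ η * b ^ 2 := by
    nlinarith [mul_nonneg hη.le (sq_nonneg b)]
  have hηb : η * b ^ 2 ≤ 8 * Ee ^ 4 * η ^ 3 * L ^ 2 * (δ ^ 2 + a ^ 2) := by
    have := mul_le_mul_of_nonneg_left hb2 hη.le
    calc η * b ^ 2 ≤ η * (8 * Ee ^ 4 * η ^ 2 * L ^ 2 * (δ ^ 2 + a ^ 2)) := this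
      _ = 8 * Ee ^ 4 * η ^ 3 * L ^ 2 * (δ ^ 2 + a ^ 2) := by ring
  have hDF' : 2 * Ee * DF ≤ -(2 * Ee ^ 2 * η * a ^ 2) + 2 * Ee * (η * a * b)
      + 2 * Ee ^ 3 * L * η ^ 2 * a ^ 2 + 2 * Ee * (L * η ^ 2 * b ^ 2) :=
    calc 2 * Ee * DF
        ≤ 2 * Ee * (-Ee * η * a ^ 2 + η * a * b
            + L / 2 * η ^ 2 * (2 * Ee ^ 2 * a ^ 2 + 2 * b ^ 2)) :=
          mul_le_mul_of_nonneg_left hDF (by linarith)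
      _ = -(2 * Ee ^ 2 * η * a ^ 2) + 2 * Ee * (η * a * b)
          + 2 * Ee ^ 3 * L * η ^ 2 * a ^ 2 + 2 * Ee * (L * η ^ 2 * b ^ 2) := by ring
  have hnn : (0:ℝ) ≤ Ee ^ 4 * η ^ 3 * L ^ 2 * (δ ^ 2 + a ^ 2) := by positivity
  have hmul : 2 * Ee * DF ≤ 2 * Ee * (-(Ee * η / 2) * (1 - 2 * Ee * η * L
      - 64 * Ee ^ 2 * η ^ 2 * L ^ 2) * a ^ 2 + 32 * Ee ^ 3 * η ^ 3 * L ^ 2 * δ ^ 2) := by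
    have hgoal : 2 * Ee * (-(Ee * η / 2) * (1 - 2 * Ee * η * L
        - 64 * Ee ^ 2 * η ^ 2 * L ^ 2) * a ^ 2 + 32 * Ee ^ 3 * η ^ 3 * L ^ 2 * δ ^ 2)
        = -(Ee ^ 2 * η * a ^ 2) + 2 * Ee ^ 3 * η ^ 2 * L * a ^ 2
          + 64 * Ee ^ 4 * η ^ 3 * L ^ 2 * a ^ 2 + 64 * Ee ^ 4 * η ^ 3 * L ^ 2 * δ ^ 2 := by
      ring
    rw [hgoal]
    nlinarith [hDF', hab, hLb, hηb, hnn]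
  exact le_of_mul_le_mul_left hmul (by linarith)
end Helpers

set_option maxHeartbeats 1000000 in
/-- Descent bound for the shared-parameter block (Lemma O1, full-gradient
case): one round of federated local gradient descent with E local steps
decreases F by an amount proportional to ‖∇F(θ⁰)‖², up to the heterogeneity
term 32E³η³L₁²δ². -/
theorem stmt_12 (d M : ℕ) (f : Fin M → EuclideanSpace ℝ (Fin d) → ℝ) (L₁ : ℝ)
    (hdiff : ∀ i, Differentiable ℝ (f i))
    (hLip : ∀ i x y, ‖gradient (f i) x - gradient (f i) y‖ ≤ L₁ * ‖x - y‖)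
    (p : Fin M → ℝ) (hp : ∀ i, 0 ≤ p i) (hpsum : ∑ i, p i = 1)
    (F : EuclideanSpace ℝ (Fin d) → ℝ) (hF : ∀ θ, F θ = ∑ i, p i * f i θ)
    (δ : ℝ) (hδ : 0 ≤ δ)
    (hdiv : ∀ θ, ∑ i, p i * ‖gradient (f i) θ - gradient F θ‖ ^ 2 ≤ δ ^ 2)
    (E : ℕ) (hE : 0 < E) (η : ℝ) (hη : 0 < η)
    (hη2 : η ≤ 1 / (2 * (E : ℝ) * L₁))
    (θ0 : EuclideanSpace ℝ (Fin d)) (θloc : Fin M → ℕ → EuclideanSpace ℝ (Fin d))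
    (h0 : ∀ i, θloc i 0 = θ0)
    (hstep : ∀ i τ, τ < E →
      θloc i (τ + 1) = θloc i τ - η • gradient (f i) (θloc i τ))
    (θplus : EuclideanSpace ℝ (Fin d))
    (hθplus : θplus
      = θ0 - η • ∑ i, p i • ∑ τ ∈ Finset.range E, gradient (f i) (θloc i τ)) :
    F θplus - F θ0
      ≤ -((E : ℝ) * η / 2) * (1 - 2 * (E : ℝ) * η * L₁
            - 64 * (E : ℝ) ^ 2 * η ^ 2 * L₁ ^ 2) * ‖gradient F θ0‖ ^ 2
        + 32 * (E : ℝ) ^ 3 * η ^ 3 * L₁ ^ 2 * δ ^ 2 := by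
  -- basic positivity
  have hE1 : (1:ℝ) ≤ (E:ℝ) := by exact_mod_cast hE
  have hL₁ : 0 < L₁ := by
    by_contra hcon
    push_neg at hcon
    have h1 : 2 * (E:ℝ) * L₁ ≤ 0 :=
      mul_nonpos_of_nonneg_of_nonpos (by positivity) hcon
    have h2 : 1 / (2 * (E:ℝ) * L₁) ≤ 0 := one_div_nonpos.mpr h1
    linarith
  have h2EL : (0:ℝ) < 2 * (E:ℝ) * L₁ := by positivity
  have hsmall : 2 * (E:ℝ) * η * L₁ ≤ 1 := by
    have := (le_div_iff₀ h2EL).mp hη2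
    nlinarith [this]
  -- gradient of F
  have hgradF : ∀ θ, gradient F θ = ∑ i, p i • gradient (f i) θ :=
    gradient_weighted_sum f p hdiff F hF
  have hdF : Differentiable ℝ F := fun θ =>
    (hasGradientAt_weighted_sum f p hdiff F hF θ).differentiableAt
  have hlipF : ∀ x y, ‖gradient F x - gradient F y‖ ≤ L₁ * ‖x - y‖ := by
    intro x y
    rw [hgradF, hgradF, ← Finset.sum_sub_distrib]
    calc ‖∑ i, (p i • gradient (f i) x - p i • gradient (f i) y)‖
        ≤ ∑ i, ‖p i • (gradient (f i) x - gradient (f i) y)‖ := by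
          simp_rw [← smul_sub]; exact norm_sum_le _ _
      _ ≤ ∑ i, p i * (L₁ * ‖x - y‖) := by
          apply Finset.sum_le_sum
          intro i _
          rw [norm_smul, Real.norm_eq_abs, abs_of_nonneg (hp i)]
          exact mul_le_mul_of_nonneg_left (hLip i x y) (hp i)
      _ = L₁ * ‖x - y‖ := by rw [← Finset.sum_mul, hpsum, one_mul]
  set g : Fin M → ℕ → EuclideanSpace ℝ (Fin d) :=
    fun i τ => gradient (f i) (θloc i τ) with hg
  set B : Fin M → ℝ := fun i => ‖gradient (f i) θ0‖ with hB
  -- drift bound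
  have drift : ∀ i, ∀ τ, τ ≤ E → ‖θloc i τ - θ0‖ ≤ 2 * η * τ * B i := by
    intro i τ
    induction τ with
    | zero => intro _; simp [h0]
    | succ τ ih =>
      intro hτE
      have hτ : τ ≤ E := Nat.le_of_succ_le hτE
      have hih := ih hτ
      have hτR : (τ:ℝ) ≤ (E:ℝ) := by exact_mod_cast hτ
      rw [hstep i τ (Nat.lt_of_succ_le hτE), sub_right_comm]
      have hgb : ‖g i τ‖ ≤ B i + L₁ * ‖θloc i τ - θ0‖ := by
        calc ‖g i τ‖ = ‖(g i τ - gradient (f i) θ0) + gradient (f i) θ0‖ := by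
              rw [sub_add_cancel]
          _ ≤ ‖g i τ - gradient (f i) θ0‖ + ‖gradient (f i) θ0‖ := norm_add_le _ _
          _ ≤ L₁ * ‖θloc i τ - θ0‖ + B i := by
              exact add_le_add (hLip i (θloc i τ) θ0) le_rfl
          _ = B i + L₁ * ‖θloc i τ - θ0‖ := by ring
      calc ‖(θloc i τ - θ0) - η • g i τ‖
          ≤ ‖θloc i τ - θ0‖ + ‖η • g i τ‖ := norm_sub_le _ _
        _ = ‖θloc i τ - θ0‖ + η * ‖g i τ‖ := by
            rw [norm_smul, Real.norm_eq_abs, abs_of_pos hη]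
        _ ≤ 2 * η * (τ + 1 : ℕ) * B i := by
            push_cast
            have hBnn : 0 ≤ B i := norm_nonneg _
            have hXnn : 0 ≤ ‖θloc i τ - θ0‖ := norm_nonneg _
            nlinarith [mul_le_mul_of_nonneg_left hih (by positivity : (0:ℝ) ≤ η * L₁),
              mul_le_mul_of_nonneg_left hτR
                (by positivity : (0:ℝ) ≤ 2 * η * L₁ * η * B i),
              mul_le_mul_of_nonneg_right hsmall (mul_nonneg hη.le hBnn),
              mul_le_mul_of_nonneg_left hgb hη.le]
  -- gradient deviation along the trajectory
  have gdiff : ∀ i, ∀ τ < E, ‖g i τ - gradient (f i) θ0‖ ≤ 2 * η * E * L₁ * B i := by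
    intro i τ hτ
    calc ‖g i τ - gradient (f i) θ0‖ ≤ L₁ * ‖θloc i τ - θ0‖ := hLip i _ _
      _ ≤ L₁ * (2 * η * τ * B i) :=
          mul_le_mul_of_nonneg_left (drift i τ hτ.le) hL₁.le
      _ ≤ 2 * η * E * L₁ * B i := by
          have hτR : (τ:ℝ) ≤ (E:ℝ) := by exact_mod_cast hτ.le
          have hBnn : 0 ≤ B i := norm_nonneg _
          nlinarith [mul_le_mul_of_nonneg_right hτR (mul_nonneg (by positivity : (0:ℝ) ≤ L₁ * 2 * η) hBnn)]
  -- Cauchy-Schwarz on gradient diversity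
  have hdiv0 := hdiv θ0
  set gF := gradient F θ0 with hgFdef
  have hCS : ∑ i, p i * ‖gradient (f i) θ0 - gF‖ ≤ δ := by
    have hsq : (∑ i, p i * ‖gradient (f i) θ0 - gF‖) ^ 2
        ≤ (∑ i, p i) * (∑ i, p i * ‖gradient (f i) θ0 - gF‖ ^ 2) := by
      have h := Finset.sum_mul_sq_le_sq_mul_sq Finset.univ (fun i => Real.sqrt (p i))
        (fun i => Real.sqrt (p i) * ‖gradient (f i) θ0 - gF‖)
      have e1 : ∀ i : Fin M, Real.sqrt (p i) * (Real.sqrt (p i) * ‖gradient (f i) θ0 - gF‖)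
          = p i * ‖gradient (f i) θ0 - gF‖ := fun i => by
        rw [← mul_assoc, Real.mul_self_sqrt (hp i)]
      have e2 : ∀ i : Fin M, Real.sqrt (p i) ^ 2 = p i := fun i => Real.sq_sqrt (hp i)
      have e3 : ∀ i : Fin M, (Real.sqrt (p i) * ‖gradient (f i) θ0 - gF‖) ^ 2
          = p i * ‖gradient (f i) θ0 - gF‖ ^ 2 := fun i => by
        rw [mul_pow, Real.sq_sqrt (hp i)]
      simp only [e1, e2, e3] at h
      exact h
    rw [hpsum, one_mul] at hsq
    have hsq2 : (∑ i, p i * ‖gradient (f i) θ0 - gF‖) ^ 2 ≤ δ ^ 2 := le_trans hsq hdiv0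
    have hnn : 0 ≤ ∑ i, p i * ‖gradient (f i) θ0 - gF‖ :=
      Finset.sum_nonneg fun i _ => mul_nonneg (hp i) (norm_nonneg _)
    nlinarith [hsq2, hnn]
  have hsumB : ∑ i, p i * B i ≤ δ + ‖gF‖ := by
    calc ∑ i, p i * B i ≤ ∑ i, p i * (‖gradient (f i) θ0 - gF‖ + ‖gF‖) := by
          apply Finset.sum_le_sum
          intro i _
          apply mul_le_mul_of_nonneg_left _ (hp i)
          calc B i = ‖(gradient (f i) θ0 - gF) + gF‖ := by rw [sub_add_cancel]
            _ ≤ ‖gradient (f i) θ0 - gF‖ + ‖gF‖ := norm_add_le _ _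
      _ = (∑ i, p i * ‖gradient (f i) θ0 - gF‖) + (∑ i, p i) * ‖gF‖ := by
          rw [Finset.sum_mul]; rw [← Finset.sum_add_distrib]; congr 1; funext i; ring
      _ ≤ δ + ‖gF‖ := by rw [hpsum, one_mul]; exact add_le_add hCS le_rfl
  -- the aggregated update direction and its deviation
  set G : EuclideanSpace ℝ (Fin d) := ∑ i, p i • ∑ τ ∈ Finset.range E, g i τ with hGdef
  set Δ : EuclideanSpace ℝ (Fin d) := G - (E:ℝ) • gF with hΔdef
  have hΔeq : Δ = ∑ i, p i • ∑ τ ∈ Finset.range E, (g i τ - gradient (f i) θ0) := by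
    have step : ∀ i : Fin M, p i • ∑ τ ∈ Finset.range E, (g i τ - gradient (f i) θ0)
        = p i • ∑ τ ∈ Finset.range E, g i τ - (E:ℝ) • (p i • gradient (f i) θ0) := by
      intro i
      rw [Finset.sum_sub_distrib, Finset.sum_const, Finset.card_range, smul_sub]
      congr 1
      rw [← Nat.cast_smul_eq_nsmul ℝ, smul_comm]
    rw [Finset.sum_congr rfl (fun i _ => step i), Finset.sum_sub_distrib,
      ← Finset.smul_sum, hΔdef, hGdef]
    congr 1
    rw [hgFdef, hgradF θ0]
  have hΔnorm : ‖Δ‖ ≤ 2 * η * (E:ℝ) ^ 2 * L₁ * (δ + ‖gF‖) := by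
    rw [hΔeq]
    calc ‖∑ i, p i • ∑ τ ∈ Finset.range E, (g i τ - gradient (f i) θ0)‖
        ≤ ∑ i, p i * ((E:ℝ) * (2 * η * E * L₁ * B i)) := by
          refine (norm_sum_le _ _).trans (Finset.sum_le_sum fun i _ => ?_)
          rw [norm_smul, Real.norm_eq_abs, abs_of_nonneg (hp i)]
          apply mul_le_mul_of_nonneg_left _ (hp i)
          calc ‖∑ τ ∈ Finset.range E, (g i τ - gradient (f i) θ0)‖
              ≤ ∑ τ ∈ Finset.range E, ‖g i τ - gradient (f i) θ0‖ := norm_sum_le _ _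
            _ ≤ ∑ _τ ∈ Finset.range E, (2 * η * E * L₁ * B i) :=
                Finset.sum_le_sum fun τ hτ => gdiff i τ (Finset.mem_range.mp hτ)
            _ = (E:ℝ) * (2 * η * E * L₁ * B i) := by
                rw [Finset.sum_const, Finset.card_range, nsmul_eq_mul]
      _ = 2 * η * (E:ℝ) ^ 2 * L₁ * ∑ i, p i * B i := by
          rw [Finset.mul_sum]; congr 1; funext i; ring
      _ ≤ 2 * η * (E:ℝ) ^ 2 * L₁ * (δ + ‖gF‖) :=
          mul_le_mul_of_nonneg_left hsumB (by positivity)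
  -- descent step
  have hkey := descent_lemma F L₁ hdF hlipF θ0 (-(η • G))
  have hθp : θplus = θ0 + -(η • G) := by rw [hθplus, sub_eq_add_neg]
  rw [← hθp] at hkey
  have hGdecomp : G = (E:ℝ) • gF + Δ := by rw [hΔdef]; abel
  have hinner : (inner ℝ gF (-(η • G)) : ℝ)
      = -(η * ((E:ℝ) * ‖gF‖ ^ 2 + (inner ℝ gF Δ : ℝ))) := by
    have i1 : (inner ℝ gF (-(η • G)) : ℝ) = -(η * (inner ℝ gF G : ℝ)) := by
      rw [inner_neg_right, real_inner_smul_right]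
    have i2 : (inner ℝ gF G : ℝ) = (E:ℝ) * ‖gF‖ ^ 2 + (inner ℝ gF Δ : ℝ) := by
      rw [hGdecomp, inner_add_right, real_inner_smul_right, real_inner_self_eq_norm_sq]
    rw [i1, i2]
  have habs : |(inner ℝ gF Δ : ℝ)| ≤ ‖gF‖ * ‖Δ‖ := abs_real_inner_le_norm _ _
  have hnormG : ‖G‖ ≤ (E:ℝ) * ‖gF‖ + ‖Δ‖ := by
    rw [hGdecomp]
    refine (norm_add_le _ _).trans ?_
    rw [norm_smul, Real.norm_eq_abs, abs_of_pos (by linarith : (0:ℝ) < (E:ℝ))]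
  have hηG : ‖-(η • G)‖ ^ 2 = η ^ 2 * ‖G‖ ^ 2 := by
    rw [norm_neg, norm_smul, Real.norm_eq_abs, abs_of_pos hη, mul_pow]
  have hDF : F θplus - F θ0 ≤ -(E:ℝ) * η * ‖gF‖ ^ 2 + η * ‖gF‖ * ‖Δ‖
      + L₁ / 2 * η ^ 2 * (2 * (E:ℝ) ^ 2 * ‖gF‖ ^ 2 + 2 * ‖Δ‖ ^ 2) := by
    have hG2 : ‖G‖ ^ 2 ≤ 2 * (E:ℝ) ^ 2 * ‖gF‖ ^ 2 + 2 * ‖Δ‖ ^ 2 := by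
      nlinarith [hnormG, norm_nonneg G, norm_nonneg gF, norm_nonneg Δ,
        sq_nonneg ((E:ℝ) * ‖gF‖ - ‖Δ‖)]
    rw [hinner, hηG] at hkey
    have h5 : η * (-(‖gF‖ * ‖Δ‖)) ≤ η * (inner ℝ gF Δ : ℝ) :=
      mul_le_mul_of_nonneg_left (neg_le_of_abs_le habs) hη.le
    have h6 := mul_le_mul_of_nonneg_left hG2 (by positivity : (0:ℝ) ≤ L₁ / 2 * η ^ 2)
    nlinarith [hkey, h5, h6]
  exact arith_core (E:ℝ) η L₁ ‖gF‖ ‖Δ‖ δ (F θplus - F θ0) hE1 hη hL₁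
    (norm_nonneg _) (norm_nonneg _) hδ hsmall hΔnorm hDF
end

section
/- Let K, M be positive integers, let λ ≥ 0, and let W be a symmetric positive semi-definite real M×M matrix with entries w_ij and row sums d_ii = Σ_j w_ij. Let φ₁,…,φ_M be real-valued functions differentiable on a neighborhood of Δ^K satisfying the smoothness condition ‖∇φ_i(c') − ∇φ_i(c) + 2λ d_ii (c' − c)‖_∞ ≤ L₂ ‖c' − c‖₁ for all c, c' ∈ Δ^K. Define F(c₁,…,c_M) = Σ_{i=1}^M φ_i(c_i) + λ(Σ_i d_ii ⟨c_i, c_i⟩ − Σ_{i,j} w_ij ⟨c_i, c_j⟩). Let c₁ᵗ,…,c_Mᵗ ∈ Δ^K each have all coordinates strictly positive, let 0 < η < 2/L₂, and set c_i^{t+1} = MD(c_iᵗ, ∇φ_i(c_iᵗ) + 2λ(d_ii c_iᵗ − Σ_j w_ij c_jᵗ), η) for each i. Then F(c₁^{t+1},…,c_M^{t+1}) − F(c₁ᵗ,…,c_Mᵗ) ≤ −(η/2)(1 − (L₂/2)η) Σ_{i=1}^M ‖(c_iᵗ − c_i^{t+1})/η‖₁². -/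
open Matrix Finset


lemma pade {t : ℝ} (ht : 1 ≤ t) : 2 * (t - 1) ≤ (t + 1) * Real.log t := by
  set f : ℝ → ℝ := fun t => (t + 1) * Real.log t - 2 * (t - 1) with hf
  have hd : ∀ x ∈ Set.Ici (1:ℝ), HasDerivAt f (Real.log x + (x + 1) * x⁻¹ - 2) x := by
    intro x hx
    have hx0 : x ≠ 0 := by have : (1:ℝ) ≤ x := hx; positivity
    have h1 : HasDerivAt (fun t : ℝ => (t + 1) * Real.log t)
        (1 * Real.log x + (x + 1) * x⁻¹) x :=
      ((hasDerivAt_id x).add_const 1).mul (Real.hasDerivAt_log hx0)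
    have h2 : HasDerivAt (fun t : ℝ => 2 * (t - 1)) 2 x := by
      simpa using ((hasDerivAt_id x).sub_const 1).const_mul 2
    exact (h1.sub h2).congr_deriv (by ring)
  have hmono : MonotoneOn f (Set.Ici 1) := by
    apply monotoneOn_of_deriv_nonneg (convex_Ici 1)
    · exact fun x hx => (hd x hx).continuousAt.continuousWithinAt
    · intro x hx
      rw [interior_Ici] at hx
      exact (hd x (Set.mem_Ici.2 (le_of_lt (Set.mem_Ioi.1 hx)))).differentiableAt.differentiableWithinAt
    · intro x hx
      rw [interior_Ici] at hx
      rw [(hd x (Set.mem_Ici.2 (le_of_lt (Set.mem_Ioi.1 hx)))).deriv]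
      have hx1 : (1:ℝ) < x := hx
      have hx0 : 0 < x := by linarith
      have hlog : 1 - x⁻¹ ≤ Real.log x := by
        have := Real.log_le_sub_one_of_pos (x := x⁻¹) (by positivity)
        rw [Real.log_inv] at this
        linarith
      have : (x + 1) * x⁻¹ = 1 + x⁻¹ := by field_simp
      rw [this]; linarith
  have h0 : f 1 = 0 := by simp [hf]
  have := hmono (Set.self_mem_Ici) ht ht
  rw [h0] at this
  simp only [hf] at this
  linarith

lemma logmean_half {a b : ℝ} (ha : 0 < a) (hb : 0 < b) (h : b ≤ a) :
    2 * (a - b) ≤ (a + b) * (Real.log a - Real.log b) := by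
  have ht : 1 ≤ a / b := (one_le_div hb).2 h
  have hp := pade ht
  rw [Real.log_div ha.ne' hb.ne'] at hp
  have h3 := mul_le_mul_of_nonneg_left hp hb.le
  have e0 : b * (a / b) = a := by field_simp
  have e1 : b * (2 * (a / b - 1)) = 2 * (a - b) := by linear_combination 2 * e0
  have e2 : b * ((a / b + 1) * (Real.log a - Real.log b))
      = (a + b) * (Real.log a - Real.log b) := by
    linear_combination (Real.log a - Real.log b) * e0
  rw [e1, e2] at h3
  exact h3

lemma logmean {a b : ℝ} (ha : 0 < a) (hb : 0 < b) :
    2 * (a - b) ^ 2 ≤ (a + b) * ((a - b) * (Real.log a - Real.log b)) := by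
  rcases le_total b a with h | h
  · have h2 := logmean_half ha hb h
    nlinarith [mul_le_mul_of_nonneg_left h2 (sub_nonneg.2 h)]
  · have h2 := logmean_half hb ha h
    nlinarith [mul_le_mul_of_nonneg_left h2 (sub_nonneg.2 h)]

lemma pinsker {K : ℕ} {a b : Fin K → ℝ} (ha : ∀ k, 0 < a k) (hb : ∀ k, 0 < b k)
    (ha1 : ∑ k, a k = 1) (hb1 : ∑ k, b k = 1) :
    (∑ k, |a k - b k|) ^ 2 ≤ ∑ k, (a k - b k) * (Real.log (a k) - Real.log (b k)) := by
  have hpos : ∀ k : Fin K, 0 < a k + b k := fun k => by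
    have := ha k; have := hb k; linarith
  have hcs := Finset.sum_mul_sq_le_sq_mul_sq Finset.univ
      (fun k => |a k - b k| / Real.sqrt (a k + b k))
      (fun k => Real.sqrt (a k + b k))
  have e1 : ∀ k : Fin K,
      |a k - b k| / Real.sqrt (a k + b k) * Real.sqrt (a k + b k) = |a k - b k| := by
    intro k; exact div_mul_cancel₀ _ (Real.sqrt_pos.2 (hpos k)).ne'
  have e2 : ∀ k : Fin K,
      (|a k - b k| / Real.sqrt (a k + b k)) ^ 2 = (a k - b k) ^ 2 / (a k + b k) := by
    intro k
    rw [div_pow, sq_abs, Real.sq_sqrt (hpos k).le]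
  have e3 : ∀ k : Fin K, (Real.sqrt (a k + b k)) ^ 2 = a k + b k := fun k =>
    Real.sq_sqrt (hpos k).le
  simp only [e1, e2, e3] at hcs
  have e4 : ∑ k : Fin K, (a k + b k) = 2 := by
    rw [Finset.sum_add_distrib, ha1, hb1]; norm_num
  rw [e4] at hcs
  refine hcs.trans ?_
  rw [Finset.sum_mul]
  apply Finset.sum_le_sum
  intro k _
  rw [div_mul_eq_mul_div, div_le_iff₀ (hpos k)]
  have := logmean (ha k) (hb k)
  nlinarith [this]

lemma fderiv_apply_sum {K : ℕ} (φ : (Fin K → ℝ) → ℝ) (x δ : Fin K → ℝ) :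
    (fderiv ℝ φ x) δ = ∑ k, δ k * (fderiv ℝ φ x) (Pi.single k 1) := by
  have hδ : δ = ∑ k : Fin K, δ k • (Pi.single k 1 : Fin K → ℝ) := by
    funext j
    rw [Finset.sum_apply]
    simp [Pi.single_apply]
  conv_lhs => rw [hδ]
  rw [map_sum]
  simp [smul_eq_mul]

lemma descent_aux {K : ℕ} (φ : (Fin K → ℝ) → ℝ)
    (hdiff : ∀ x ∈ stdSimplex ℝ (Fin K), DifferentiableAt ℝ φ x)
    (grad : (Fin K → ℝ) → (Fin K → ℝ))
    (hgrad : ∀ x k, grad x k = fderiv ℝ φ x (Pi.single k 1))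
    (A L₂ : ℝ)
    (hsm : ∀ x ∈ stdSimplex ℝ (Fin K), ∀ y ∈ stdSimplex ℝ (Fin K),
      (⨆ k, |grad y k - grad x k + A * (y k - x k)|) ≤ L₂ * ∑ k, |y k - x k|)
    (c c' : Fin K → ℝ) (hc : c ∈ stdSimplex ℝ (Fin K))
    (hc' : c' ∈ stdSimplex ℝ (Fin K)) :
    φ c' - φ c + A / 2 * ((∑ k, c' k * c' k) - ∑ k, c k * c k)
      ≤ (∑ k, (grad c k + A * c k) * (c' k - c k))
        + L₂ / 2 * (∑ k, |c' k - c k|) ^ 2 := by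
  classical
  set δ : Fin K → ℝ := fun k => c' k - c k with hδdef
  set S : ℝ := ∑ k, |c' k - c k| with hSdef
  set γ : ℝ → (Fin K → ℝ) := fun t => fun k => c k + t * δ k with hγdef
  have hγ0 : γ 0 = c := by funext k; simp [hγdef]
  have hγ1 : γ 1 = c' := by funext k; simp [hγdef, hδdef]
  have hmem : ∀ t ∈ Set.Icc (0:ℝ) 1, γ t ∈ stdSimplex ℝ (Fin K) := by
    intro t ht
    have h := (convex_stdSimplex ℝ (Fin K)) hc hc'
      (by linarith [ht.2] : (0:ℝ) ≤ 1 - t) ht.1 (by ring)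
    convert h using 1
    funext k
    simp [hγdef, hδdef, Pi.add_apply, smul_eq_mul]
    ring
  -- derivative of path
  have hγd : ∀ t : ℝ, HasDerivAt γ δ t := by
    intro t
    rw [hasDerivAt_pi]
    intro k
    exact (hasDerivAt_mul_const (δ k)).const_add (c k)
  set D : ℝ → ℝ := fun t => ∑ k, (grad (γ t) k + A * γ t k) * δ k with hDdef
  set h : ℝ → ℝ := fun t => φ (γ t) + A / 2 * ∑ k, γ t k * γ t k with hhdef
  have hh : ∀ t ∈ Set.Icc (0:ℝ) 1, HasDerivAt h (D t) t := by
    intro t ht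
    have h1 : HasDerivAt (fun t => φ (γ t)) ((fderiv ℝ φ (γ t)) δ) t :=
      ((hdiff (γ t) (hmem t ht)).hasFDerivAt).comp_hasDerivAt t (hγd t)
    have h2 : HasDerivAt (fun t => A / 2 * ∑ k, γ t k * γ t k)
        (A / 2 * ∑ k, (δ k * γ t k + γ t k * δ k)) t := by
      apply HasDerivAt.const_mul
      apply HasDerivAt.fun_sum
      intro k _
      have hq : HasDerivAt (fun t : ℝ => γ t k) (δ k) t :=
        (hasDerivAt_mul_const (δ k)).const_add (c k)
      exact hq.mul hq
    have := h1.add h2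
    refine this.congr_deriv ?_
    symm
    rw [hDdef, fderiv_apply_sum φ (γ t) δ]
    simp only [← hgrad]
    rw [Finset.mul_sum, ← Finset.sum_add_distrib]
    congr 1
    funext k
    ring
  -- the comparison function
  set g : ℝ → ℝ := fun t => h t - t * D 0 - L₂ / 2 * S ^ 2 * t ^ 2 with hgdef
  have hSnn : 0 ≤ S := Finset.sum_nonneg fun k _ => abs_nonneg _
  have hgd : ∀ t ∈ Set.Icc (0:ℝ) 1,
      HasDerivAt g (D t - D 0 - L₂ * S ^ 2 * t) t := by
    intro t ht
    have h1 := hh t ht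
    have h2 : HasDerivAt (fun t : ℝ => t * D 0) (D 0) t := by
      simpa using (hasDerivAt_id t).mul_const (D 0)
    have h3 : HasDerivAt (fun t : ℝ => L₂ / 2 * S ^ 2 * t ^ 2)
        (L₂ / 2 * S ^ 2 * (2 * t)) t := by
      simpa using (hasDerivAt_pow 2 t).const_mul (L₂ / 2 * S ^ 2)
    have := (h1.sub h2).sub h3
    refine this.congr_deriv ?_
    ring
  -- bound D t - D 0
  have hDbound : ∀ t ∈ Set.Icc (0:ℝ) 1, D t - D 0 ≤ L₂ * S ^ 2 * t := by
    intro t ht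
    have key : D t - D 0 = ∑ k, (grad (γ t) k - grad (γ 0) k + A * (γ t k - γ 0 k)) * δ k := by
      rw [hDdef, ← Finset.sum_sub_distrib]
      congr 1; funext k; simp [hγ0]; ring
    rw [key]
    have hsup := hsm (γ 0) (by rw [hγ0]; exact hc) (γ t) (hmem t ht)
    have hbdd : BddAbove (Set.range fun k : Fin K =>
        |grad (γ t) k - grad (γ 0) k + A * (γ t k - γ 0 k)|) :=
      Set.Finite.bddAbove (Set.finite_range _)
    have hterm : ∀ k : Fin K, (grad (γ t) k - grad (γ 0) k + A * (γ t k - γ 0 k)) * δ k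
        ≤ (L₂ * ∑ k, |γ t k - γ 0 k|) * |δ k| := by
      intro k
      calc (grad (γ t) k - grad (γ 0) k + A * (γ t k - γ 0 k)) * δ k
          ≤ |(grad (γ t) k - grad (γ 0) k + A * (γ t k - γ 0 k)) * δ k| := le_abs_self _
        _ = |grad (γ t) k - grad (γ 0) k + A * (γ t k - γ 0 k)| * |δ k| := abs_mul _ _
        _ ≤ (L₂ * ∑ k, |γ t k - γ 0 k|) * |δ k| := by
            apply mul_le_mul_of_nonneg_right _ (abs_nonneg _)
            exact (le_ciSup hbdd k).trans hsup
    calc ∑ k, (grad (γ t) k - grad (γ 0) k + A * (γ t k - γ 0 k)) * δ k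
        ≤ ∑ k, (L₂ * ∑ k, |γ t k - γ 0 k|) * |δ k| := Finset.sum_le_sum fun k _ => hterm k
      _ = (L₂ * ∑ k, |γ t k - γ 0 k|) * S := by rw [← Finset.mul_sum]
      _ = L₂ * S ^ 2 * t := by
          have e : ∀ k : Fin K, |γ t k - γ 0 k| = t * |δ k| := by
            intro k
            rw [hγ0]
            show |c k + t * δ k - c k| = t * |δ k|
            rw [show c k + t * δ k - c k = t * δ k by ring, abs_mul, abs_of_nonneg ht.1]
          simp only [e, ← Finset.mul_sum, ← hSdef]
          ring
  -- antitone
  have hanti : AntitoneOn g (Set.Icc 0 1) := by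
    apply antitoneOn_of_deriv_nonpos (convex_Icc 0 1)
    · exact fun t ht => (hgd t ht).continuousAt.continuousWithinAt
    · intro t ht
      rw [interior_Icc] at ht
      exact (hgd t (Set.mem_Icc_of_Ioo ht)).differentiableAt.differentiableWithinAt
    · intro t ht
      rw [interior_Icc] at ht
      rw [(hgd t (Set.mem_Icc_of_Ioo ht)).deriv]
      have := hDbound t (Set.mem_Icc_of_Ioo ht)
      linarith
  have hg10 := hanti (Set.left_mem_Icc.2 zero_le_one) (Set.right_mem_Icc.2 zero_le_one)
    zero_le_one
  simp only [hgdef] at hg10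
  -- unpack
  have hh1 : h 1 = φ c' + A / 2 * ∑ k, c' k * c' k := by rw [hhdef]; simp [hγ1]
  have hh0 : h 0 = φ c + A / 2 * ∑ k, c k * c k := by rw [hhdef]; simp [hγ0]
  have hD0 : D 0 = ∑ k, (grad c k + A * c k) * δ k := by
    rw [hDdef]; simp [hγ0]
  rw [hh1, hh0, hD0] at hg10
  simp only [hδdef] at hg10
  push_cast at hg10
  nlinarith [hg10]

/-- Membership-block descent bound (Lemma O2, exact-gradient case): one parallel
entropic mirror descent step on the Laplacian-regularized objective with step
size 0 < η < 2/L₂ yields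
F(C^{t+1}) − F(Cᵗ) ≤ −(η/2)(1 − (L₂/2)η) Σᵢ ‖(cᵢᵗ − cᵢ^{t+1})/η‖₁². -/
theorem stmt_13 (K M : ℕ) (lam : ℝ) (hlam : 0 ≤ lam)
    (W : Matrix (Fin M) (Fin M) ℝ) (hW : W.PosSemidef)
    (dg : Fin M → ℝ) (hdg : ∀ i, dg i = ∑ j, W i j)
    (φ : Fin M → (Fin K → ℝ) → ℝ) (L₂ : ℝ)
    (hdiff : ∀ i, ∀ c ∈ stdSimplex ℝ (Fin K), DifferentiableAt ℝ (φ i) c)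
    (grad : Fin M → (Fin K → ℝ) → (Fin K → ℝ))
    (hgrad : ∀ i c, grad i c = fun k => fderiv ℝ (φ i) c (Pi.single k 1))
    (hsmooth : ∀ i, ∀ c ∈ stdSimplex ℝ (Fin K), ∀ c' ∈ stdSimplex ℝ (Fin K),
      (⨆ k, |grad i c' k - grad i c k + 2 * lam * dg i * (c' k - c k)|)
        ≤ L₂ * ∑ k, |c' k - c k|)
    (F : (Fin M → Fin K → ℝ) → ℝ)
    (hF : ∀ c, F c = ∑ i, φ i (c i)
      + lam * (∑ i, dg i * (c i ⬝ᵥ c i) - ∑ i, ∑ j, W i j * (c i ⬝ᵥ c j)))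
    (ct : Fin M → Fin K → ℝ) (hct : ∀ i, ct i ∈ stdSimplex ℝ (Fin K))
    (hctpos : ∀ i k, 0 < ct i k)
    (η : ℝ) (hη : 0 < η) (hη2 : η < 2 / L₂)
    (gvec : Fin M → Fin K → ℝ)
    (hgvec : ∀ i k, gvec i k
      = grad i (ct i) k + 2 * lam * (dg i * ct i k - ∑ j, W i j * ct j k))
    (ct1 : Fin M → Fin K → ℝ)
    (hct1 : ∀ i k, ct1 i k
      = ct i k * Real.exp (-η * gvec i k)
        / ∑ l, ct i l * Real.exp (-η * gvec i l)) :
    F ct1 - F ct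
      ≤ -(η / 2) * (1 - (L₂ / 2) * η)
          * ∑ i, (∑ k, |(ct i k - ct1 i k) / η|) ^ 2 := by
  classical
  have h2L : 0 < 2 / L₂ := hη.trans hη2
  have hL2 : 0 < L₂ := by
    rcases div_pos_iff.1 h2L with ⟨_, h⟩ | ⟨h, _⟩
    · exact h
    · norm_num at h
  have hηL : η * L₂ < 2 := (lt_div_iff₀ hL2).1 hη2
  rcases Nat.eq_zero_or_pos M with hM0 | hM0
  · subst hM0
    simp [hF]
  have hKne : Nonempty (Fin K) := by
    by_contra hK
    haveI := not_nonempty_iff.1 hK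
    have := (hct ⟨0, hM0⟩).2
    simp at this
  -- basic facts about ct1
  set Z : Fin M → ℝ := fun i => ∑ l, ct i l * Real.exp (-η * gvec i l) with hZdef
  have hZ : ∀ i, 0 < Z i := fun i =>
    Finset.sum_pos (fun l _ => mul_pos (hctpos i l) (Real.exp_pos _)) Finset.univ_nonempty
  have hct1pos : ∀ i k, 0 < ct1 i k := by
    intro i k
    rw [hct1]
    exact div_pos (mul_pos (hctpos i k) (Real.exp_pos _)) (hZ i)
  have hct1sum : ∀ i, ∑ k, ct1 i k = 1 := by
    intro i
    simp only [hct1]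
    rw [← Finset.sum_div, div_self (hZ i).ne']
  have hct1mem : ∀ i, ct1 i ∈ stdSimplex ℝ (Fin K) :=
    fun i => ⟨fun k => (hct1pos i k).le, hct1sum i⟩
  set δ : Fin M → Fin K → ℝ := fun i k => ct1 i k - ct i k with hδdef
  set S : Fin M → ℝ := fun i => ∑ k, |δ i k| with hSdef
  have hSnn : ∀ i, 0 ≤ S i := fun i => Finset.sum_nonneg fun k _ => abs_nonneg _
  -- log identity
  have hlog : ∀ i k, Real.log (ct1 i k) - Real.log (ct i k)
      = -η * gvec i k - Real.log (Z i) := by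
    intro i k
    rw [hct1 i k, Real.log_div (mul_pos (hctpos i k) (Real.exp_pos _)).ne' (hZ i).ne',
      Real.log_mul (hctpos i k).ne' (Real.exp_pos _).ne', Real.log_exp]
    ring
  -- mirror descent inner-product bound
  have hinner : ∀ i, ∑ k, gvec i k * δ i k ≤ -(1/η) * S i ^ 2 := by
    intro i
    have hsum0 : ∑ k, δ i k = 0 := by
      simp only [hδdef]
      rw [Finset.sum_sub_distrib, hct1sum i, (hct i).2, sub_self]
    have e : ∀ k, gvec i k * δ i k
        = -(1/η) * ((ct1 i k - ct i k) * (Real.log (ct1 i k) - Real.log (ct i k)))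
          - Real.log (Z i) / η * δ i k := by
      intro k
      rw [hlog i k]
      simp only [hδdef]
      field_simp
      ring
    calc ∑ k, gvec i k * δ i k
        = -(1/η) * (∑ k, (ct1 i k - ct i k) * (Real.log (ct1 i k) - Real.log (ct i k)))
          - Real.log (Z i) / η * ∑ k, δ i k := by
          rw [Finset.mul_sum, Finset.mul_sum, ← Finset.sum_sub_distrib]
          exact Finset.sum_congr rfl fun k _ => e k
      _ = -(1/η) * ∑ k, (ct1 i k - ct i k) * (Real.log (ct1 i k) - Real.log (ct i k)) := by
          rw [hsum0]; ring
      _ ≤ -(1/η) * S i ^ 2 := by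
          have hpk := pinsker (a := ct1 i) (b := ct i) (hct1pos i) (hctpos i)
            (hct1sum i) (hct i).2
          have h1η : 0 ≤ 1/η := by positivity
          have : S i ^ 2 = (∑ k, |ct1 i k - ct i k|) ^ 2 := by rw [hSdef]
          rw [this]
          nlinarith [mul_le_mul_of_nonneg_left hpk h1η]
  -- descent lemma per client
  have hdesc : ∀ i, φ i (ct1 i) - φ i (ct i)
      + lam * dg i * ((∑ k, ct1 i k * ct1 i k) - ∑ k, ct i k * ct i k)
      ≤ (∑ k, (grad i (ct i) k + 2 * lam * dg i * ct i k) * δ i k) + L₂/2 * S i ^ 2 := by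
    intro i
    have h := descent_aux (φ i) (hdiff i) (grad i)
      (fun x k => congrFun (hgrad i x) k) (2 * lam * dg i) L₂ (hsmooth i)
      (ct i) (ct1 i) (hct i) (hct1mem i)
    have e2 : 2 * lam * dg i / 2 = lam * dg i := by ring
    rw [e2] at h
    exact h
  -- symmetry of W
  have hWsym : ∀ i j, W i j = W j i := by
    intro i j
    have h := congrFun (congrFun hW.1 i) j
    rw [Matrix.conjTranspose_apply, star_trivial] at h
    exact h.symm
  -- PSD term nonneg
  have hQ : 0 ≤ ∑ i, ∑ j, W i j * ∑ k, δ i k * δ j k := by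
    have e : ∑ i, ∑ j, W i j * ∑ k, δ i k * δ j k
        = ∑ k, ∑ i, ∑ j, W i j * (δ i k * δ j k) := by
      calc ∑ i, ∑ j, W i j * ∑ k, δ i k * δ j k
          = ∑ i, ∑ j, ∑ k, W i j * (δ i k * δ j k) := by
            apply Finset.sum_congr rfl; intro i _
            apply Finset.sum_congr rfl; intro j _
            exact Finset.mul_sum _ _ _
        _ = ∑ i, ∑ k, ∑ j, W i j * (δ i k * δ j k) := by
            apply Finset.sum_congr rfl; intro i _
            exact Finset.sum_comm
        _ = ∑ k, ∑ i, ∑ j, W i j * (δ i k * δ j k) := Finset.sum_comm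
    rw [e]
    apply Finset.sum_nonneg
    intro k _
    have h := hW.dotProduct_mulVec_nonneg (fun i => δ i k)
    simp only [dotProduct, Matrix.mulVec, RCLike.re_to_real, star_trivial] at h
    refine le_trans h (le_of_eq ?_)
    apply Finset.sum_congr rfl; intro i _
    rw [Finset.mul_sum]
    apply Finset.sum_congr rfl; intro j _
    ring
  -- cross-term decomposition
  have hswap : ∑ i, ∑ j, W i j * ∑ k, ct i k * δ j k
      = ∑ i, ∑ j, W i j * ∑ k, δ i k * ct j k := by
    rw [Finset.sum_comm]
    apply Finset.sum_congr rfl; intro i _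
    apply Finset.sum_congr rfl; intro j _
    rw [hWsym j i]
    congr 1
    apply Finset.sum_congr rfl; intro k _
    ring
  have eA : ∑ i, ∑ j, W i j * ∑ k, ct1 i k * ct1 j k
      = (∑ i, ∑ j, W i j * ∑ k, ct i k * ct j k)
        + 2 * (∑ i, ∑ j, W i j * ∑ k, δ i k * ct j k)
        + ∑ i, ∑ j, W i j * ∑ k, δ i k * δ j k := by
    have e1 : ∀ i j, W i j * ∑ k, ct1 i k * ct1 j k
        = W i j * ∑ k, ct i k * ct j k + W i j * ∑ k, δ i k * ct j k
          + W i j * ∑ k, ct i k * δ j k + W i j * ∑ k, δ i k * δ j k := by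
      intro i j
      rw [← mul_add, ← mul_add, ← mul_add]
      congr 1
      rw [← Finset.sum_add_distrib, ← Finset.sum_add_distrib, ← Finset.sum_add_distrib]
      apply Finset.sum_congr rfl; intro k _
      simp only [hδdef]
      ring
    calc ∑ i, ∑ j, W i j * ∑ k, ct1 i k * ct1 j k
        = ∑ i, ∑ j, (W i j * ∑ k, ct i k * ct j k + W i j * ∑ k, δ i k * ct j k
          + W i j * ∑ k, ct i k * δ j k + W i j * ∑ k, δ i k * δ j k) := by
          apply Finset.sum_congr rfl; intro i _
          apply Finset.sum_congr rfl; intro j _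
          exact e1 i j
      _ = (∑ i, ∑ j, W i j * ∑ k, ct i k * ct j k)
          + (∑ i, ∑ j, W i j * ∑ k, δ i k * ct j k)
          + (∑ i, ∑ j, W i j * ∑ k, ct i k * δ j k)
          + ∑ i, ∑ j, W i j * ∑ k, δ i k * δ j k := by
          simp only [Finset.sum_add_distrib]
      _ = _ := by rw [hswap]; ring
  -- expansion of F difference
  have hexp : F ct1 - F ct
      = (∑ i, (φ i (ct1 i) - φ i (ct i)
          + lam * dg i * ((∑ k, ct1 i k * ct1 i k) - ∑ k, ct i k * ct i k)))
        - 2 * lam * (∑ i, ∑ j, W i j * ∑ k, δ i k * ct j k)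
        - lam * ∑ i, ∑ j, W i j * ∑ k, δ i k * δ j k := by
    rw [hF, hF]
    simp only [dotProduct]
    rw [eA]
    rw [Finset.sum_add_distrib (f := fun i => φ i (ct1 i) - φ i (ct i))
      (g := fun i => lam * dg i * ((∑ k, ct1 i k * ct1 i k) - ∑ k, ct i k * ct i k))]
    rw [Finset.sum_sub_distrib (f := fun i => φ i (ct1 i)) (g := fun i => φ i (ct i))]
    have e2 : ∑ i, lam * dg i * ((∑ k, ct1 i k * ct1 i k) - ∑ k, ct i k * ct i k)
        = lam * ((∑ i, dg i * ∑ k, ct1 i k * ct1 i k)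
            - ∑ i, dg i * ∑ k, ct i k * ct i k) := by
      rw [mul_sub, Finset.mul_sum, Finset.mul_sum, ← Finset.sum_sub_distrib]
      apply Finset.sum_congr rfl; intro i _
      ring
    rw [e2]
    ring
  -- combine gradient terms
  have hcomb : ∀ i, (∑ k, (grad i (ct i) k + 2 * lam * dg i * ct i k) * δ i k)
      - 2 * lam * ∑ j, W i j * ∑ k, δ i k * ct j k
      = ∑ k, gvec i k * δ i k := by
    intro i
    have e1 : ∑ j, W i j * ∑ k, δ i k * ct j k
        = ∑ k, (∑ j, W i j * ct j k) * δ i k := by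
      calc ∑ j, W i j * ∑ k, δ i k * ct j k
          = ∑ j, ∑ k, W i j * ct j k * δ i k := by
            apply Finset.sum_congr rfl; intro j _
            rw [Finset.mul_sum]
            apply Finset.sum_congr rfl; intro k _
            ring
        _ = ∑ k, ∑ j, W i j * ct j k * δ i k := Finset.sum_comm
        _ = ∑ k, (∑ j, W i j * ct j k) * δ i k := by
            apply Finset.sum_congr rfl; intro k _
            rw [Finset.sum_mul]
    rw [e1, Finset.mul_sum, ← Finset.sum_sub_distrib]
    apply Finset.sum_congr rfl; intro k _
    rw [hgvec i k]
    ring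
  -- putting it together
  have hmain : F ct1 - F ct ≤ (L₂/2 - 1/η) * ∑ i, S i ^ 2 := by
    have hsum_desc := Finset.sum_le_sum (fun i (_ : i ∈ Finset.univ) => hdesc i)
    have hsum_inner := Finset.sum_le_sum (fun i (_ : i ∈ Finset.univ) => hinner i)
    have e3 : ∑ i, ((∑ k, (grad i (ct i) k + 2 * lam * dg i * ct i k) * δ i k)
          + L₂/2 * S i ^ 2)
        - 2 * lam * (∑ i, ∑ j, W i j * ∑ k, δ i k * ct j k)
        = (∑ i, ∑ k, gvec i k * δ i k) + L₂/2 * ∑ i, S i ^ 2 := by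
      rw [Finset.sum_add_distrib, Finset.mul_sum]
      have e4 : ∑ i, (∑ k, (grad i (ct i) k + 2 * lam * dg i * ct i k) * δ i k)
          - ∑ i, 2 * lam * ∑ j, W i j * ∑ k, δ i k * ct j k
          = ∑ i, ∑ k, gvec i k * δ i k := by
        rw [← Finset.sum_sub_distrib]
        exact Finset.sum_congr rfl fun i _ => hcomb i
      rw [Finset.mul_sum Finset.univ (fun i => S i ^ 2) (L₂/2)]
      linear_combination e4
    have hlamQ : 0 ≤ lam * ∑ i, ∑ j, W i j * ∑ k, δ i k * δ j k := mul_nonneg hlam hQ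
    have h5 : ∑ i, (-(1/η) * S i ^ 2) = -(1/η) * ∑ i, S i ^ 2 :=
      (Finset.mul_sum _ _ _).symm
    have hgoal_e : (L₂/2 - 1/η) * ∑ i, S i ^ 2
        = L₂/2 * ∑ i, S i ^ 2 + (-(1/η) * ∑ i, S i ^ 2) := by ring
    rw [hexp]
    linarith [hsum_desc, e3, hsum_inner, hlamQ, h5, hgoal_e]
  -- final conversion
  have habs : ∀ i, ∑ k, |(ct i k - ct1 i k) / η| = S i / η := by
    intro i
    simp only [hSdef]
    rw [Finset.sum_div]
    apply Finset.sum_congr rfl; intro k _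
    rw [abs_div, abs_of_pos hη, abs_sub_comm]
  have hrhs : ∑ i, (∑ k, |(ct i k - ct1 i k) / η|) ^ 2 = (∑ i, S i ^ 2) / η ^ 2 := by
    rw [Finset.sum_div]
    apply Finset.sum_congr rfl; intro i _
    rw [habs i, div_pow]
  rw [hrhs]
  have hT : 0 ≤ ∑ i, S i ^ 2 := Finset.sum_nonneg fun i _ => sq_nonneg _
  have hcoef : L₂/2 - 1/η ≤ -(η/2) * (1 - L₂/2*η) / η^2 := by
    rw [le_div_iff₀ (by positivity : (0:ℝ) < η^2)]
    have h1 : 1/η * η^2 = η := by rw [sq]; field_simp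
    nlinarith [hηL, hη, h1]
  calc F ct1 - F ct ≤ (L₂/2 - 1/η) * ∑ i, S i ^ 2 := hmain
    _ ≤ (-(η/2) * (1 - L₂/2*η) / η^2) * ∑ i, S i ^ 2 :=
        mul_le_mul_of_nonneg_right hcoef hT
    _ = -(η / 2) * (1 - L₂ / 2 * η) * ((∑ i, S i ^ 2) / η ^ 2) := by ring
end
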